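/- arXiv:2101.00682 — 6 statements merged into one kernel-verified Lean document; each statement's English description precedes it below -/
import Mathlib

section
/- Let o, p, q, m be points of the hyperbolic plane ℍ and R ≥ 0. If p and q lie in the closed ball of radius R centered at o and m is a midpoint of p and q, then dist(o,m) ≤ R − dist(p,q)/2 + 5. -/
open scoped UpperHalfPlane

/-- cosh of the hyperbolic distance as a Minkowski product in the hyperboloid model. -/
lemma cosh_dist_minkowski (z w : ℍ) :
    Real.cosh (dist z w) =
      ((z.re ^ 2 + z.im ^ 2 + 1) / (2 * z.im)) * ((w.re ^ 2 + w.im ^ 2 + 1) / (2 * w.im))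
        - (z.re / z.im) * (w.re / w.im)
        - ((z.re ^ 2 + z.im ^ 2 - 1) / (2 * z.im)) * ((w.re ^ 2 + w.im ^ 2 - 1) / (2 * w.im)) := by
  have hz := z.im_pos
  have hw := w.im_pos
  have hd : dist (z : ℂ) (w : ℂ) ^ 2 = (z.re - w.re) ^ 2 + (z.im - w.im) ^ 2 := by
    rw [Complex.dist_eq, Complex.sq_norm, Complex.normSq_apply]
    simp [Complex.sub_re, Complex.sub_im, UpperHalfPlane.coe_re, UpperHalfPlane.coe_im]
    ring
  rw [UpperHalfPlane.cosh_dist, hd]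
  field_simp
  ring

/-- A Minkowski-null vector orthogonal to a unit timelike vector is zero. -/
lemma null_orth_eq_zero (d0 d1 d2 p0 p1 p2 : ℝ)
    (h1 : d0 * p0 - d1 * p1 - d2 * p2 = 0)
    (h2 : d0 ^ 2 - d1 ^ 2 - d2 ^ 2 = 0)
    (h3 : p0 ^ 2 - p1 ^ 2 - p2 ^ 2 = 1) :
    d0 = 0 ∧ d1 = 0 ∧ d2 = 0 := by
  have key : d0 ^ 2 + (d1 * p2 - d2 * p1) ^ 2 = 0 := by
    linear_combination (d0 * p0 + d1 * p1 + d2 * p2) * h1 - (p1 ^ 2 + p2 ^ 2) * h2 - d0 ^ 2 * h3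
  have hd0 : d0 = 0 := by nlinarith [sq_nonneg (d1 * p2 - d2 * p1), sq_nonneg d0]
  have hd12 : d1 ^ 2 + d2 ^ 2 = 0 := by nlinarith
  have hd1 : d1 = 0 := by nlinarith [sq_nonneg d1, sq_nonneg d2]
  have hd2 : d2 = 0 := by nlinarith [sq_nonneg d1, sq_nonneg d2]
  exact ⟨hd0, hd1, hd2⟩

/-- The hyperbolic median identity: if `m` is a midpoint of `p` and `q`, then
`2 cosh(d(o,m)) cosh(d(p,q)/2) = cosh(d(o,p)) + cosh(d(o,q))`. -/
lemma median_identity (o p q m : ℍ)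
    (hpm : dist p m = dist p q / 2) (hmq : dist m q = dist p q / 2) :
    2 * Real.cosh (dist o m) * Real.cosh (dist p q / 2) =
      Real.cosh (dist o p) + Real.cosh (dist o q) := by
  set c : ℝ := Real.cosh (dist p q / 2) with hc
  -- coordinates in the hyperboloid model
  set p0 : ℝ := (p.re ^ 2 + p.im ^ 2 + 1) / (2 * p.im)
  set p1 : ℝ := p.re / p.im
  set p2 : ℝ := (p.re ^ 2 + p.im ^ 2 - 1) / (2 * p.im)
  set q0 : ℝ := (q.re ^ 2 + q.im ^ 2 + 1) / (2 * q.im)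
  set q1 : ℝ := q.re / q.im
  set q2 : ℝ := (q.re ^ 2 + q.im ^ 2 - 1) / (2 * q.im)
  set m0 : ℝ := (m.re ^ 2 + m.im ^ 2 + 1) / (2 * m.im)
  set m1 : ℝ := m.re / m.im
  set m2 : ℝ := (m.re ^ 2 + m.im ^ 2 - 1) / (2 * m.im)
  set o0 : ℝ := (o.re ^ 2 + o.im ^ 2 + 1) / (2 * o.im)
  set o1 : ℝ := o.re / o.im
  set o2 : ℝ := (o.re ^ 2 + o.im ^ 2 - 1) / (2 * o.im)
  have unit : ∀ z : ℍ, ((z.re ^ 2 + z.im ^ 2 + 1) / (2 * z.im)) ^ 2 - (z.re / z.im) ^ 2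
      - ((z.re ^ 2 + z.im ^ 2 - 1) / (2 * z.im)) ^ 2 = 1 := by
    intro z
    have hz := z.im_pos
    field_simp
    ring
  have hPP : p0 ^ 2 - p1 ^ 2 - p2 ^ 2 = 1 := unit p
  have hQQ : q0 ^ 2 - q1 ^ 2 - q2 ^ 2 = 1 := unit q
  have hMM : m0 ^ 2 - m1 ^ 2 - m2 ^ 2 = 1 := unit m
  have hPM : p0 * m0 - p1 * m1 - p2 * m2 = c := by
    rw [hc, ← hpm, ← cosh_dist_minkowski]
  have hMQ : m0 * q0 - m1 * q1 - m2 * q2 = c := by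
    rw [hc, ← hmq, ← cosh_dist_minkowski]
  have hPQ : p0 * q0 - p1 * q1 - p2 * q2 = 2 * c ^ 2 - 1 := by
    have h2 : dist p q = 2 * (dist p q / 2) := by ring
    have := cosh_dist_minkowski p q
    rw [h2, Real.cosh_two_mul, Real.cosh_sq'] at this
    rw [← this, hc]
    rw [Real.cosh_sq']
    ring
  -- the vector D = 2c·M - P - Q is null and orthogonal to P, hence zero
  obtain ⟨e0, e1, e2⟩ := null_orth_eq_zero (2 * c * m0 - p0 - q0) (2 * c * m1 - p1 - q1)
      (2 * c * m2 - p2 - q2) p0 p1 p2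
      (by linear_combination 2 * c * hPM - hPP - hPQ)
      (by linear_combination 4 * c ^ 2 * hMM - 4 * c * hPM - 4 * c * hMQ + hPP + hQQ + 2 * hPQ)
      hPP
  have hOM := cosh_dist_minkowski o m
  have hOP := cosh_dist_minkowski o p
  have hOQ := cosh_dist_minkowski o q
  rw [hOM, hOP, hOQ]
  have h0 : 2 * c * m0 = p0 + q0 := by linarith
  have h1 : 2 * c * m1 = p1 + q1 := by linarith
  have h2 : 2 * c * m2 = p2 + q2 := by linarith
  linear_combination o0 * h0 - o1 * h1 - o2 * h2

/-- The midpoint of a segment of length `L` inside an `R`-ball in the hyperbolic plane is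
within `R - L/2 + 5` of the center. -/
theorem midpoint_close_to_center (o p q m : ℍ) (R : ℝ) (hR : 0 ≤ R)
    (hp : p ∈ Metric.closedBall o R) (hq : q ∈ Metric.closedBall o R)
    (hpm : dist p m = dist p q / 2) (hmq : dist m q = dist p q / 2) :
    dist o m ≤ R - dist p q / 2 + 5 := by
  have hp' : dist o p ≤ R := by rw [dist_comm]; exact hp
  have hq' : dist o q ≤ R := by rw [dist_comm]; exact hq
  have hmed := median_identity o p q m hpm hmq
  set L : ℝ := dist p q with hL
  have hL0 : 0 ≤ L := dist_nonneg
  set c : ℝ := Real.cosh (L / 2) with hc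
  have hc1 : 1 ≤ c := Real.one_le_cosh _
  -- cosh(dist o p) ≤ cosh R
  have hcop : Real.cosh (dist o p) ≤ Real.cosh R := by
    rw [Real.cosh_le_cosh, abs_of_nonneg dist_nonneg, abs_of_nonneg hR]; exact hp'
  have hcoq : Real.cosh (dist o q) ≤ Real.cosh R := by
    rw [Real.cosh_le_cosh, abs_of_nonneg dist_nonneg, abs_of_nonneg hR]; exact hq'
  -- exp bounds
  have hexp_om : Real.exp (dist o m) ≤ 2 * Real.cosh (dist o m) := by
    rw [Real.cosh_eq]
    have := (Real.exp_pos (-dist o m)).le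
    linarith
  have hcR : Real.cosh R ≤ Real.exp R := by
    rw [Real.cosh_eq]
    have h1 : Real.exp (-R) ≤ Real.exp R := Real.exp_le_exp.2 (by linarith)
    linarith
  have hcL : Real.exp (L / 2) ≤ 2 * c := by
    rw [hc, Real.cosh_eq]
    have := (Real.exp_pos (-(L / 2))).le
    linarith
  have hcpos : (0 : ℝ) < c := by linarith
  -- combine: exp(dist o m) * exp(L/2) ≤ 2cosh(dom) * 2c = 2(cosh a + cosh b) ≤ 4 cosh R ≤ 4 exp R
  have key : Real.exp (dist o m) * Real.exp (L / 2) ≤ 4 * Real.exp R := by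
    have h1 : Real.exp (dist o m) * Real.exp (L / 2) ≤
        (2 * Real.cosh (dist o m)) * (2 * c) := by
      apply mul_le_mul hexp_om hcL (Real.exp_pos _).le
      positivity
    have h2 : (2 * Real.cosh (dist o m)) * (2 * c) =
        2 * (Real.cosh (dist o p) + Real.cosh (dist o q)) := by
      linear_combination 2 * hmed
    have h3 : 2 * (Real.cosh (dist o p) + Real.cosh (dist o q)) ≤ 4 * Real.cosh R := by
      linarith
    have h4 : 4 * Real.cosh R ≤ 4 * Real.exp R := by linarith
    linarith
  -- conclude
  have hfinal : Real.exp (dist o m + L / 2) ≤ Real.exp (R + 5) := by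
    rw [Real.exp_add]
    calc Real.exp (dist o m) * Real.exp (L / 2) ≤ 4 * Real.exp R := key
      _ ≤ Real.exp 5 * Real.exp R := by
          have h5 : (4 : ℝ) ≤ Real.exp 5 := by
            have := Real.add_one_le_exp (5 : ℝ)
            linarith
          nlinarith [Real.exp_pos R]
      _ = Real.exp (R + 5) := by rw [← Real.exp_add]; ring_nf
  have := Real.exp_le_exp.1 hfinal
  linarith
end

section
/- Let o, p, q be points of the hyperbolic plane ℍ with dist(o,p) = dist(o,q) = R. Let f be a unit-speed geodesic from p to q and let g be a unit-speed geodesic from p to o. Then for every t with 0 ≤ t ≤ dist(p,q)/2, one has dist(f(t), g(t)) ≤ 20. -/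
open Real UpperHalfPlane

lemma dist_coe_sq (z w : ℍ) : dist (z : ℂ) (w : ℂ) ^ 2 =
    (z.re - w.re)^2 + (z.im - w.im)^2 := by
  rw [Complex.dist_eq_re_im, Real.sq_sqrt (by positivity)]
  simp [UpperHalfPlane.coe_re, UpperHalfPlane.coe_im]

noncomputable def circPt (c ρ u : ℝ) (hρ : 0 < ρ) : ℍ :=
  ⟨⟨c + ρ * Real.tanh u, ρ / Real.cosh u⟩, by
    have := Real.cosh_pos u
    show 0 < ρ / Real.cosh u
    positivity⟩

@[simp] lemma circPt_re (c ρ u : ℝ) (hρ : 0 < ρ) : (circPt c ρ u hρ).re = c + ρ * Real.tanh u := rfl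
@[simp] lemma circPt_im (c ρ u : ℝ) (hρ : 0 < ρ) : (circPt c ρ u hρ).im = ρ / Real.cosh u := rfl

lemma circ_linear (c ρ : ℝ) (hρ : 0 < ρ) (o : ℍ) (u : ℝ) :
    Real.cosh (dist o (circPt c ρ u hρ)) =
      (((o.re - c)^2 + o.im^2 + ρ^2)/(2*o.im*ρ)) * Real.cosh u
        + (-((o.re - c)/o.im)) * Real.sinh u := by
  have hb : 0 < o.im := o.im_pos
  have hch : 0 < Real.cosh u := Real.cosh_pos u
  rw [UpperHalfPlane.cosh_dist, dist_coe_sq, circPt_re, circPt_im,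
    Real.tanh_eq_sinh_div_cosh]
  have h1 : Real.cosh u ^ 2 - Real.sinh u ^ 2 = 1 := Real.cosh_sq_sub_sinh_sq u
  field_simp
  linear_combination (-ρ^2) * h1

lemma circ_dist (c ρ : ℝ) (hρ : 0 < ρ) (u v : ℝ) :
    dist (circPt c ρ u hρ) (circPt c ρ v hρ) = |u - v| := by
  have h := circ_linear c ρ hρ (circPt c ρ v hρ) u
  have hch : 0 < Real.cosh v := Real.cosh_pos v
  have h1 : Real.cosh v ^ 2 - Real.sinh v ^ 2 = 1 := Real.cosh_sq_sub_sinh_sq v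
  have hK : (((circPt c ρ v hρ).re - c)^2 + (circPt c ρ v hρ).im^2 + ρ^2)/(2*(circPt c ρ v hρ).im*ρ)
      = Real.cosh v := by
    rw [circPt_re, circPt_im, Real.tanh_eq_sinh_div_cosh]
    field_simp
    linear_combination (-ρ^2) * h1
  have hL : -(((circPt c ρ v hρ).re - c)/(circPt c ρ v hρ).im) = - Real.sinh v := by
    rw [circPt_re, circPt_im, Real.tanh_eq_sinh_div_cosh]
    field_simp
    ring
  rw [hK, hL] at h
  have h2 : Real.cosh (dist (circPt c ρ u hρ) (circPt c ρ v hρ)) = Real.cosh (u - v) := by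
    rw [dist_comm, h, Real.cosh_sub]; ring
  have h3 : |dist (circPt c ρ u hρ) (circPt c ρ v hρ)| = |u - v| := by
    apply le_antisymm
    · exact Real.cosh_le_cosh.mp h2.le
    · exact Real.cosh_le_cosh.mp h2.ge
  rwa [abs_of_nonneg dist_nonneg] at h3

noncomputable def vertPt (a u : ℝ) : ℍ := ⟨⟨a, Real.exp u⟩, Real.exp_pos u⟩

@[simp] lemma vertPt_re (a u : ℝ) : (vertPt a u).re = a := rfl
@[simp] lemma vertPt_im (a u : ℝ) : (vertPt a u).im = Real.exp u := rfl

lemma vert_linear (a : ℝ) (o : ℍ) (u : ℝ) :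
    Real.cosh (dist o (vertPt a u)) =
      ((1 + (o.re - a)^2 + o.im^2)/(2*o.im)) * Real.cosh u
        + ((1 - (o.re - a)^2 - o.im^2)/(2*o.im)) * Real.sinh u := by
  have hb : 0 < o.im := o.im_pos
  have he : 0 < Real.exp u := Real.exp_pos u
  rw [UpperHalfPlane.cosh_dist, dist_coe_sq, vertPt_re, vertPt_im,
    Real.cosh_eq, Real.sinh_eq, Real.exp_neg]
  field_simp
  ring

lemma vert_dist (a u v : ℝ) : dist (vertPt a u) (vertPt a v) = |u - v| := by
  have h := (UpperHalfPlane.isometry_vertical_line a).dist_eq u v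
  simpa [Real.dist_eq, vertPt] using h

lemma exists_mid (z w : ℍ) : ∃ m : ℍ,
    dist z m = dist z w / 2 ∧ dist w m = dist z w / 2 ∧
    ∀ o : ℍ, Real.cosh (dist o z) + Real.cosh (dist o w)
      = 2 * Real.cosh (dist z w / 2) * Real.cosh (dist o m) := by
  suffices h : ∃ (γ : ℝ → ℍ) (u v : ℝ), γ u = z ∧ γ v = w ∧
      (∀ a b, dist (γ a) (γ b) = |a - b|) ∧
      (∀ o : ℍ, ∃ K L : ℝ, ∀ a, Real.cosh (dist o (γ a)) = K * Real.cosh a + L * Real.sinh a) by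
    obtain ⟨γ, u, v, hu, hv, hd, hlin⟩ := h
    have hzw : dist z w = |u - v| := by rw [← hu, ← hv, hd]
    refine ⟨γ ((u+v)/2), ?_, ?_, ?_⟩
    · rw [hzw, ← hu, hd, show u - (u+v)/2 = (u-v)/2 by ring, abs_div]
      norm_num
    · rw [hzw, ← hv, hd, show v - (u+v)/2 = -((u-v)/2) by ring, abs_neg, abs_div]
      norm_num
    · intro o
      obtain ⟨K, L, hKL⟩ := hlin o
      rw [hzw, ← hu, ← hv, hKL, hKL, hKL,
        show |u - v|/2 = |(u-v)/2| by rw [abs_div]; norm_num, Real.cosh_abs]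
      have e1 : Real.cosh u = Real.cosh ((u+v)/2) * Real.cosh ((u-v)/2)
          + Real.sinh ((u+v)/2) * Real.sinh ((u-v)/2) := by
        rw [← Real.cosh_add, show (u+v)/2 + (u-v)/2 = u by ring]
      have e2 : Real.sinh u = Real.sinh ((u+v)/2) * Real.cosh ((u-v)/2)
          + Real.cosh ((u+v)/2) * Real.sinh ((u-v)/2) := by
        rw [← Real.sinh_add, show (u+v)/2 + (u-v)/2 = u by ring]
      have e3 : Real.cosh v = Real.cosh ((u+v)/2) * Real.cosh ((u-v)/2)
          - Real.sinh ((u+v)/2) * Real.sinh ((u-v)/2) := by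
        rw [← Real.cosh_sub, show (u+v)/2 - (u-v)/2 = v by ring]
      have e4 : Real.sinh v = Real.sinh ((u+v)/2) * Real.cosh ((u-v)/2)
          - Real.cosh ((u+v)/2) * Real.sinh ((u-v)/2) := by
        rw [← Real.sinh_sub, show (u+v)/2 - (u-v)/2 = v by ring]
      linear_combination K*e1 + L*e2 + K*e3 + L*e4
  by_cases hre : z.re = w.re
  · refine ⟨fun y => vertPt z.re y, Real.log z.im, Real.log w.im, ?_, ?_, vert_dist z.re,
      fun o => ⟨_, _, fun a => vert_linear z.re o a⟩⟩
    · exact UpperHalfPlane.ext' rfl (Real.exp_log z.im_pos)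
    · exact UpperHalfPlane.ext' hre (Real.exp_log w.im_pos)
  · have hzim := z.im_pos
    have hwim := w.im_pos
    set c : ℝ := (z.re^2 + z.im^2 - (w.re^2 + w.im^2))/(2*(z.re - w.re)) with hc
    have hsub : z.re - w.re ≠ 0 := sub_ne_zero.mpr hre
    have hcirc : (z.re - c)^2 + z.im^2 = (w.re - c)^2 + w.im^2 := by
      rw [hc]; field_simp; ring
    set ρ : ℝ := Real.sqrt ((z.re - c)^2 + z.im^2) with hρdef
    have hρpos : 0 < ρ := Real.sqrt_pos.mpr (by positivity)
    have hρ2 : ρ^2 = (z.re - c)^2 + z.im^2 := Real.sq_sqrt (by positivity)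
    have hρ2' : ρ^2 = (w.re - c)^2 + w.im^2 := hρ2.trans hcirc
    refine ⟨fun y => circPt c ρ y hρpos, Real.arsinh ((z.re - c)/z.im),
      Real.arsinh ((w.re - c)/w.im), ?_, ?_, circ_dist c ρ hρpos,
      fun o => ⟨_, _, fun a => circ_linear c ρ hρpos o a⟩⟩
    · have hcosh : Real.cosh (Real.arsinh ((z.re - c)/z.im)) = ρ / z.im := by
        rw [Real.cosh_arsinh, show 1 + ((z.re - c)/z.im)^2 = (ρ/z.im)^2 by
          rw [div_pow, div_pow, hρ2]; field_simp; ring]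
        exact Real.sqrt_sq (by positivity)
      apply UpperHalfPlane.ext'
      · show c + ρ * Real.tanh _ = _
        rw [Real.tanh_eq_sinh_div_cosh, Real.sinh_arsinh, hcosh]
        field_simp [hρpos.ne', hzim.ne']; ring
      · show ρ / Real.cosh _ = _
        rw [hcosh]
        field_simp [hρpos.ne', hzim.ne']
    · have hcosh : Real.cosh (Real.arsinh ((w.re - c)/w.im)) = ρ / w.im := by
        rw [Real.cosh_arsinh, show 1 + ((w.re - c)/w.im)^2 = (ρ/w.im)^2 by
          rw [div_pow, div_pow, hρ2']; field_simp; ring]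
        exact Real.sqrt_sq (by positivity)
      apply UpperHalfPlane.ext'
      · show c + ρ * Real.tanh _ = _
        rw [Real.tanh_eq_sinh_div_cosh, Real.sinh_arsinh, hcosh]
        field_simp [hρpos.ne', hwim.ne']; ring
      · show ρ / Real.cosh _ = _
        rw [hcosh]
        field_simp [hρpos.ne', hwim.ne']

lemma median (z w m : ℍ) (h1 : dist z m = dist z w / 2) (h2 : dist w m = dist z w / 2)
    (o : ℍ) : Real.cosh (dist o z) + Real.cosh (dist o w)
      = 2 * Real.cosh (dist z w / 2) * Real.cosh (dist o m) := by
  obtain ⟨m₀, hm1, hm2, hmed⟩ := exists_mid z w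
  have key : m = m₀ := by
    have h := hmed m
    rw [dist_comm m z, dist_comm m w] at h
    rw [h1, h2] at h
    have hpos : 0 < Real.cosh (dist z w / 2) := Real.cosh_pos _
    have : Real.cosh (dist m m₀) = 1 := by
      have h2c : (2 * Real.cosh (dist z w / 2)) * Real.cosh (dist m m₀)
          = (2 * Real.cosh (dist z w / 2)) * 1 := by linarith
      exact mul_left_cancel₀ (by positivity) h2c
    have hd0 : dist m m₀ = 0 := by
      by_contra hne
      exact absurd this (ne_of_gt (Real.one_lt_cosh.mpr hne))
    exact dist_eq_zero.mp hd0
  rw [key]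
  exact hmed o

open scoped UpperHalfPlane

/-- `f` is a unit-speed geodesic from `a` to `b` in the hyperbolic plane. -/
def IsUnitSpeedGeodesic (f : ℝ → ℍ) (a b : ℍ) : Prop :=
  f 0 = a ∧ f (dist a b) = b ∧
    ∀ s t : ℝ, s ∈ Set.Icc 0 (dist a b) → t ∈ Set.Icc 0 (dist a b) →
      dist (f s) (f t) = |s - t|

/-- Fellow traveling in the hyperbolic plane with constant `4δ = 20`: for `p, q` on a
sphere centered at `o`, the geodesic from `p` to `q` fellow travels the geodesic from `p`
to `o` until the midpoint of `pq`. -/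
theorem fellow_traveling (o p q : ℍ) (R : ℝ)
    (hp : dist o p = R) (hq : dist o q = R)
    (f g : ℝ → ℍ)
    (hf : IsUnitSpeedGeodesic f p q) (hg : IsUnitSpeedGeodesic g p o)
    (t : ℝ) (ht0 : 0 ≤ t) (ht : t ≤ dist p q / 2) :
    dist (f t) (g t) ≤ 20 := by
  obtain ⟨hf0, hfd, hfiso⟩ := hf
  obtain ⟨hg0, hgd, hgiso⟩ := hg
  have hpo : dist p o = R := by rw [dist_comm]; exact hp
  rw [hpo] at hgiso hgd
  set d : ℝ := dist p q with hd
  have hd0 : 0 ≤ d := dist_nonneg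
  have hR0 : 0 ≤ R := hp ▸ dist_nonneg
  have hdR : d ≤ 2 * R := by
    calc d ≤ dist p o + dist o q := dist_triangle p o q
    _ = 2 * R := by rw [hpo, hq]; ring
  have htd : t ≤ d := by linarith
  have htR : t ≤ R := by linarith
  have h0m : (0:ℝ) ∈ Set.Icc 0 d := ⟨le_refl _, hd0⟩
  have htm : t ∈ Set.Icc (0:ℝ) d := ⟨ht0, htd⟩
  have hdm : d ∈ Set.Icc (0:ℝ) d := ⟨hd0, le_refl _⟩
  have hmm : d/2 ∈ Set.Icc (0:ℝ) d := ⟨by linarith, by linarith⟩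
  have h0R : (0:ℝ) ∈ Set.Icc 0 R := ⟨le_refl _, hR0⟩
  have htRm : t ∈ Set.Icc (0:ℝ) R := ⟨ht0, htR⟩
  have hRRm : R ∈ Set.Icc (0:ℝ) R := ⟨hR0, le_refl _⟩
  -- basic distances
  have hfp : dist p (f t) = t := by
    rw [← hf0, dist_comm, hfiso t 0 htm h0m, sub_zero, abs_of_nonneg ht0]
  have hmidp : dist p (f (d/2)) = d/2 := by
    rw [← hf0, dist_comm, hfiso (d/2) 0 hmm h0m, sub_zero, abs_of_nonneg (by linarith)]
  have hmidq : dist q (f (d/2)) = d/2 := by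
    rw [← hfd, dist_comm, hfiso (d/2) d hmm hdm, abs_of_nonpos (by linarith)]
    ring
  have hgt : dist p (g t) = t := by
    rw [← hg0, dist_comm, hgiso t 0 htRm h0R, sub_zero, abs_of_nonneg ht0]
  have hgo : dist o (g t) = R - t := by
    rw [← hgd, dist_comm, hgiso t R htRm hRRm, abs_of_nonpos (by linarith)]
    ring
  -- median identity for the triangle (p, q, o) with midpoint f (d/2)
  have hmed1 := median p q (f (d/2)) hmidp (by rw [← hd]; exact hmidq) o
  rw [hp, hq] at hmed1
  have hA : Real.cosh (d/2) * Real.cosh (dist o (f (d/2))) = Real.cosh R := by linarith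
  -- midpoint of f t and g t
  obtain ⟨m₀, hx1, hx2, hxmed⟩ := exists_mid (f t) (g t)
  set D : ℝ := dist (f t) (g t) with hD
  have hD0 : 0 ≤ D := dist_nonneg
  have hmp := hxmed p
  rw [hfp, hgt] at hmp
  have hmo := hxmed o
  rw [hgo] at hmo
  -- auxiliary exponential facts
  have e_half : ∀ x : ℝ, Real.exp x ≤ 2 * Real.cosh x := fun x => by
    rw [Real.cosh_eq]; have := Real.exp_pos (-x); linarith
  have c_le_exp : ∀ x : ℝ, 0 ≤ x → Real.cosh x ≤ Real.exp x := fun x hx => by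
    rw [Real.cosh_eq]
    have : Real.exp (-x) ≤ Real.exp x := Real.exp_le_exp.mpr (by linarith)
    linarith
  set A : ℝ := dist o (f (d/2)) with hAdef
  set α : ℝ := dist p m₀ with hα
  set β : ℝ := dist o m₀ with hβ
  set cD : ℝ := Real.cosh (D/2) with hcD
  have hA0 : 0 ≤ A := dist_nonneg
  have hα0 : 0 ≤ α := dist_nonneg
  have hβ0 : 0 ≤ β := dist_nonneg
  have hcD1 : 1 ≤ cD := Real.one_le_cosh _
  -- bound dist o (f t)
  have hoft : dist o (f t) ≤ A + (d/2 - t) := by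
    calc dist o (f t) ≤ dist o (f (d/2)) + dist (f (d/2)) (f t) := dist_triangle _ _ _
    _ = A + (d/2 - t) := by
        rw [hfiso (d/2) t hmm htm, abs_of_nonneg (by linarith)]
  have htri : R ≤ α + β := by
    calc R = dist p o := hpo.symm
    _ ≤ dist p m₀ + dist m₀ o := dist_triangle _ _ _
    _ = α + β := by rw [dist_comm m₀ o]
  -- step 1 : cosh (dist o (f t)) ≤ 4 * exp (R - t)
  have step1 : Real.cosh (dist o (f t)) ≤ 4 * Real.exp (R - t) := by
    have s1 : Real.cosh (dist o (f t)) ≤ Real.cosh (A + (d/2 - t)) := by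
      apply Real.cosh_le_cosh.mpr
      rw [abs_of_nonneg dist_nonneg, abs_of_nonneg (by linarith)]
      exact hoft
    have s2 : Real.cosh (A + (d/2 - t)) ≤ Real.exp (A + (d/2 - t)) :=
      c_le_exp _ (by linarith)
    have s3 : Real.exp (A + (d/2 - t)) = Real.exp A * Real.exp (d/2) * Real.exp (-t) := by
      rw [← Real.exp_add, ← Real.exp_add]; ring_nf
    have s4 : Real.exp A ≤ 2 * Real.cosh A := e_half A
    have s5 : Real.cosh A * Real.exp (d/2) ≤ Real.cosh A * (2 * Real.cosh (d/2)) := by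
      have := e_half (d/2)
      have hcA : 0 ≤ Real.cosh A := (Real.cosh_pos A).le
      nlinarith
    have s6 : Real.cosh R ≤ Real.exp R := c_le_exp R hR0
    have s7 : Real.exp (R - t) = Real.exp R * Real.exp (-t) := by
      rw [← Real.exp_add]; ring_nf
    have hexpt : 0 < Real.exp (-t) := Real.exp_pos _
    have hexpd : 0 < Real.exp (d/2) := Real.exp_pos _
    have m1 : Real.exp A * Real.exp (d/2) ≤ 2 * (Real.cosh A * Real.exp (d/2)) := by
      have := mul_le_mul_of_nonneg_right s4 hexpd.le
      linarith
    have m2 : Real.cosh A * Real.exp (d/2) ≤ 2 * Real.cosh R := by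
      have h5 := mul_le_mul_of_nonneg_left (e_half (d/2)) (Real.cosh_pos A).le
      have h6 : Real.cosh A * (2 * Real.cosh (d/2)) = 2 * Real.cosh R := by
        rw [← hA]; ring
      linarith
    have m3 : Real.exp A * Real.exp (d/2) ≤ 4 * Real.exp R := by linarith
    have m4 : Real.exp A * Real.exp (d/2) * Real.exp (-t)
        ≤ 4 * Real.exp R * Real.exp (-t) := mul_le_mul_of_nonneg_right m3 hexpt.le
    calc Real.cosh (dist o (f t)) ≤ Real.cosh (A + (d/2 - t)) := s1
    _ ≤ Real.exp (A + (d/2 - t)) := s2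
    _ = Real.exp A * Real.exp (d/2) * Real.exp (-t) := s3
    _ ≤ 4 * Real.exp R * Real.exp (-t) := m4
    _ = 4 * Real.exp (R - t) := by rw [s7]; ring
  -- step 2 : cD * exp β ≤ 5 * exp (R - t)
  have step2 : cD * Real.exp β ≤ 5 * Real.exp (R - t) := by
    have s1 : Real.exp β ≤ 2 * Real.cosh β := e_half β
    have s2 : Real.cosh (R - t) ≤ Real.exp (R - t) := c_le_exp _ (by linarith)
    have hcDpos : 0 < cD := Real.cosh_pos _
    have h1 := mul_le_mul_of_nonneg_left s1 hcDpos.le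
    have h2 : cD * (2 * Real.cosh β) = 2 * cD * Real.cosh β := by ring
    linarith [h1, h2, hmo, step1, s2]
  -- step 3 : cD * exp α ≤ 2 * exp t
  have step3 : cD * Real.exp α ≤ 2 * Real.exp t := by
    have s1 : Real.exp α ≤ 2 * Real.cosh α := e_half α
    have s2 : Real.cosh t ≤ Real.exp t := c_le_exp t ht0
    have hcDpos : 0 < cD := Real.cosh_pos _
    have h1 := mul_le_mul_of_nonneg_left s1 hcDpos.le
    have h2 : cD * (2 * Real.cosh α) = 2 * cD * Real.cosh α := by ring
    linarith [h1, h2, hmp, s2]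
  -- combine : cD^2 ≤ 10
  have step4 : cD^2 ≤ 10 := by
    have s1 : Real.exp R ≤ Real.exp α * Real.exp β := by
      rw [← Real.exp_add]
      exact Real.exp_le_exp.mpr htri
    have s2 : Real.exp t * Real.exp (R - t) = Real.exp R := by
      rw [← Real.exp_add]; ring_nf
    have hcDpos : 0 < cD := Real.cosh_pos _
    have hea : 0 < Real.exp α := Real.exp_pos _
    have heb : 0 < Real.exp β := Real.exp_pos _
    have het : 0 < Real.exp t := Real.exp_pos _
    have heR : 0 < Real.exp R := Real.exp_pos _
    have key : cD^2 * Real.exp R ≤ 10 * Real.exp R := by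
      calc cD^2 * Real.exp R ≤ cD^2 * (Real.exp α * Real.exp β) :=
            mul_le_mul_of_nonneg_left s1 (by positivity)
      _ = (cD * Real.exp α) * (cD * Real.exp β) := by ring
      _ ≤ (2 * Real.exp t) * (5 * Real.exp (R - t)) := by
          apply mul_le_mul step3 step2 (by positivity) (by positivity)
      _ = 10 * Real.exp R := by rw [← s2]; ring
    exact le_of_mul_le_mul_right key heR
  -- step 5 : exp D ≤ 40
  have step5 : Real.exp D ≤ 40 := by
    have s1 : Real.exp (D/2) * Real.exp (D/2) = Real.exp D := by
      rw [← Real.exp_add]; ring_nf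
    have s2 : Real.exp (D/2) ≤ 2 * cD := e_half _
    have hcDpos : 0 < cD := Real.cosh_pos _
    have h1 : Real.exp (D/2) * Real.exp (D/2) ≤ (2*cD) * (2*cD) :=
      mul_le_mul s2 s2 (Real.exp_pos _).le (by positivity)
    have h2 : (2*cD) * (2*cD) = 4 * cD^2 := by ring
    linarith [h1, h2, s1, step4]
  have h11 : (11:ℝ) ≤ Real.exp 10 := by
    have := Real.add_one_le_exp (10:ℝ); linarith
  have h121 : (121:ℝ) ≤ Real.exp 20 := by
    have he : Real.exp 20 = Real.exp 10 * Real.exp 10 := by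
      rw [← Real.exp_add]; norm_num
    have h := mul_le_mul h11 h11 (by norm_num) (le_trans (by norm_num) h11)
    rw [he]; linarith
  have hfin : Real.exp D ≤ Real.exp 20 := by linarith
  exact Real.exp_le_exp.mp hfin
end

section
/- Let e be an isometry of the hyperbolic plane ℍ (a bijective distance-preserving map ℍ → ℍ), let o ∈ ℍ, R ≥ 0, μ ≥ 0, and let p ∈ ℍ satisfy dist(o,p) ≤ R, dist(o, e(p)) ≤ R, dist(o, e⁻¹(p)) ≤ R, and dist(o,p) ≥ R − μ. If m is a midpoint of p and e(p), then dist(e⁻¹(m), m) ≤ μ + 45. -/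
open scoped UpperHalfPlane
open Real

noncomputable def hP0 (z : ℍ) : ℝ := (z.re ^ 2 + z.im ^ 2 + 1) / (2 * z.im)
noncomputable def hP1 (z : ℍ) : ℝ := z.re / z.im
noncomputable def hP2 (z : ℍ) : ℝ := (z.re ^ 2 + z.im ^ 2 - 1) / (2 * z.im)

lemma hP_norm (z : ℍ) : hP0 z ^ 2 - hP1 z ^ 2 - hP2 z ^ 2 = 1 := by
  have hz : z.im ≠ 0 := z.im_pos.ne'
  unfold hP0 hP1 hP2; field_simp; ring

lemma hP0_pos (z : ℍ) : 0 < hP0 z := by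
  have hz : 0 < z.im := z.im_pos
  unfold hP0; positivity

lemma hform_eq (z w : ℍ) :
    hP0 z * hP0 w - hP1 z * hP1 w - hP2 z * hP2 w = Real.cosh (dist z w) := by
  have hz : (0:ℝ) < z.im := z.im_pos
  have hw : (0:ℝ) < w.im := w.im_pos
  rw [UpperHalfPlane.cosh_dist]
  have hd : dist (z : ℂ) (w : ℂ) ^ 2 = (z.re - w.re) ^ 2 + (z.im - w.im) ^ 2 := by
    rw [Complex.dist_eq_re_im, Real.sq_sqrt (by positivity)]
    simp [UpperHalfPlane.coe_re, UpperHalfPlane.coe_im]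
  rw [hd]; unfold hP0 hP1 hP2; field_simp; ring


lemma mink_key (u0 u1 u2 v0 v1 v2 n0 n1 n2 x0 x1 x2 c : ℝ)
    (hn : n0 ^ 2 - n1 ^ 2 - n2 ^ 2 = 1) (hn0 : 0 < n0)
    (hu : u0 ^ 2 - u1 ^ 2 - u2 ^ 2 = 1) (hv : v0 ^ 2 - v1 ^ 2 - v2 ^ 2 = 1)
    (huv : u0 * v0 - u1 * v1 - u2 * v2 = 2 * c ^ 2 - 1)
    (hnu : n0 * u0 - n1 * u1 - n2 * u2 = c) (hnv : n0 * v0 - n1 * v1 - n2 * v2 = c) :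
    (x0 * u0 - x1 * u1 - x2 * u2) + (x0 * v0 - x1 * v1 - x2 * v2)
      = 2 * c * (x0 * n0 - x1 * n1 - x2 * n2) := by
  set d0 := 2 * c * n0 - u0 - v0 with hd0
  set d1 := 2 * c * n1 - u1 - v1 with hd1
  set d2 := 2 * c * n2 - u2 - v2 with hd2
  have hDD : d0 ^ 2 - d1 ^ 2 - d2 ^ 2 = 0 := by
    rw [hd0, hd1, hd2]
    linear_combination 4 * c ^ 2 * hn - 4 * c * hnu - 4 * c * hnv + hu + hv + 2 * huv
  have hDn : d0 * n0 - d1 * n1 - d2 * n2 = 0 := by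
    rw [hd0, hd1, hd2]
    linear_combination 2 * c * hn - hnu - hnv
  have key : d0 ^ 2 + (d1 * n2 - d2 * n1) ^ 2 = 0 := by
    linear_combination (d0 * n0 + d1 * n1 + d2 * n2) * hDn - d0 ^ 2 * hn - (n1 ^ 2 + n2 ^ 2) * hDD
  have h0 : d0 = 0 := by
    have : d0 ^ 2 = 0 :=
      le_antisymm (by linarith [sq_nonneg (d1 * n2 - d2 * n1)]) (sq_nonneg d0)
    exact sq_eq_zero_iff.mp this
  have hs : d1 ^ 2 + d2 ^ 2 = 0 := by linear_combination d0 * h0 - hDD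
  have h1 : d1 = 0 := sq_eq_zero_iff.mp (le_antisymm (by linarith [sq_nonneg d2]) (sq_nonneg d1))
  have h2 : d2 = 0 := sq_eq_zero_iff.mp (le_antisymm (by linarith [sq_nonneg d1]) (sq_nonneg d2))
  have e0 : u0 + v0 = 2 * c * n0 := by rw [hd0] at h0; linarith
  have e1 : u1 + v1 = 2 * c * n1 := by rw [hd1] at h1; linarith
  have e2 : u2 + v2 = 2 * c * n2 := by rw [hd2] at h2; linarith
  linear_combination x0 * e0 - x1 * e1 - x2 * e2


lemma cosh_inj_nonneg {a b : ℝ} (ha : 0 ≤ a) (hb : 0 ≤ b)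
    (h : Real.cosh a = Real.cosh b) : a = b :=
  Real.cosh_strictMonoOn.injOn ha hb h

lemma huv_aux (u v : ℍ) :
    hP0 u * hP0 v - hP1 u * hP1 v - hP2 u * hP2 v
      = 2 * Real.cosh (dist u v / 2) ^ 2 - 1 := by
  rw [hform_eq, show dist u v = 2 * (dist u v / 2) by ring, Real.cosh_two_mul, Real.sinh_sq]
  ring

lemma hyperbolic_median (x u v n : ℍ) (h1 : dist u n = dist u v / 2)
    (h2 : dist n v = dist u v / 2) :
    Real.cosh (dist x u) + Real.cosh (dist x v)
      = 2 * Real.cosh (dist x n) * Real.cosh (dist u v / 2) := by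
  set c := Real.cosh (dist u v / 2) with hc
  have hnu : hP0 n * hP0 u - hP1 n * hP1 u - hP2 n * hP2 u = c := by
    rw [hform_eq, dist_comm n u, h1]
  have hnv : hP0 n * hP0 v - hP1 n * hP1 v - hP2 n * hP2 v = c := by
    rw [hform_eq, h2]
  have H := mink_key (hP0 u) (hP1 u) (hP2 u) (hP0 v) (hP1 v) (hP2 v)
    (hP0 n) (hP1 n) (hP2 n) (hP0 x) (hP1 x) (hP2 x) c
    (hP_norm n) (hP0_pos n) (hP_norm u) (hP_norm v) (huv_aux u v) hnu hnv
  rw [hform_eq, hform_eq, hform_eq] at H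
  rw [H]; ring

lemma exists_midpoint (u v : ℍ) :
    ∃ n : ℍ, dist u n = dist u v / 2 ∧ dist n v = dist u v / 2 := by
  set c := Real.cosh (dist u v / 2) with hc
  have hc1 : 1 ≤ c := Real.one_le_cosh _
  have hcpos : 0 < c := by linarith
  set A0 := (hP0 u + hP0 v) / (2 * c) with hA0def
  set A1 := (hP1 u + hP1 v) / (2 * c) with hA1def
  set A2 := (hP2 u + hP2 v) / (2 * c) with hA2def
  have hA : A0 ^ 2 - A1 ^ 2 - A2 ^ 2 = 1 := by
    rw [hA0def, hA1def, hA2def]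
    have h1 := hP_norm u
    have h2 := hP_norm v
    have h3 := huv_aux u v
    rw [← hc] at h3
    field_simp
    linear_combination h1 + h2 + 2 * h3
  have hA0 : 0 < A0 := by
    rw [hA0def]
    have := hP0_pos u; have := hP0_pos v
    positivity
  have hA02 : 0 < A0 - A2 := by
    nlinarith [sq_nonneg A1, sq_nonneg (A0 + A2)]
  have hne : A0 - A2 ≠ 0 := hA02.ne'
  have h1 := hP_norm u
  have h2 := hP_norm v
  have h3 := huv_aux u v
  rw [← hc] at h3
  clear_value A0 A1 A2
  set n : ℍ := ⟨⟨A1 / (A0 - A2), 1 / (A0 - A2)⟩, by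
    simpa using one_div_pos.mpr hA02⟩ with hndef
  have hre : n.re = A1 / (A0 - A2) := rfl
  have him : n.im = 1 / (A0 - A2) := rfl
  have hn0 : hP0 n = A0 := by
    unfold hP0; rw [hre, him]; field_simp; linear_combination (-1) * hA
  have hn1 : hP1 n = A1 := by
    unfold hP1; rw [hre, him]; field_simp
  have hn2 : hP2 n = A2 := by
    unfold hP2; rw [hre, him]; field_simp; linear_combination (-1) * hA
  have hcu : Real.cosh (dist u n) = c := by
    rw [← hform_eq, hn0, hn1, hn2, hA0def, hA1def, hA2def]
    field_simp
    linear_combination h1 + h3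
  have hcv : Real.cosh (dist n v) = c := by
    rw [← hform_eq, hn0, hn1, hn2, hA0def, hA1def, hA2def]
    field_simp
    linear_combination h2 + h3
  exact ⟨n, cosh_inj_nonneg dist_nonneg (by positivity) (by rw [hcu, hc]),
    cosh_inj_nonneg dist_nonneg (by positivity) (by rw [hcv, hc])⟩

lemma cosh_mono' {a b : ℝ} (ha : 0 ≤ a) (h : a ≤ b) : Real.cosh a ≤ Real.cosh b :=
  Real.cosh_le_cosh.mpr (by rw [abs_of_nonneg ha, abs_of_nonneg (ha.trans h)]; exact h)

lemma exp_le_two_cosh' (x : ℝ) : Real.exp x ≤ 2 * Real.cosh x := by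
  rw [Real.cosh_eq]
  nlinarith [Real.exp_pos (-x)]

lemma cosh_le_exp' {x : ℝ} (hx : 0 ≤ x) : Real.cosh x ≤ Real.exp x := by
  rw [Real.cosh_eq]
  nlinarith [Real.exp_le_exp.mpr (neg_le_self hx)]

/-- Delzant's lemma in the hyperbolic plane with `δ = 5`: if `p`, `e p` and `e⁻¹ p` all lie
in `closedBall o R` and `p` is in the `μ`-neighborhood of the boundary, then the midpoint
`m` of `p` and `e p` is moved at most `μ + 45` by `e⁻¹`. -/
theorem delzant_lemma (e : ℍ ≃ᵢ ℍ) (o : ℍ) (R μ : ℝ) (hR : 0 ≤ R) (hμ : 0 ≤ μ)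
    (p : ℍ) (hp : dist o p ≤ R) (hep : dist o (e p) ≤ R) (heinvp : dist o (e.symm p) ≤ R)
    (hpμ : R - μ ≤ dist o p)
    (m : ℍ) (hpm : dist p m = dist p (e p) / 2) (hmep : dist m (e p) = dist p (e p) / 2) :
    dist (e.symm m) m ≤ μ + 45 := by
  set L := dist p (e p) with hLdef
  have hL0 : 0 ≤ L := dist_nonneg
  set m1 := e.symm m with hm1
  have hd1 : dist (e.symm p) m1 = L / 2 := by
    rw [hm1, IsometryEquiv.dist_eq]; exact hpm
  have hd2 : dist m1 p = L / 2 := by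
    have h := e.dist_eq m1 p
    rw [hm1, e.apply_symm_apply] at h
    rw [hm1, ← h]; exact hmep
  have hd3 : dist (e.symm p) p = L := by
    have h := e.dist_eq (e.symm p) p
    rw [e.apply_symm_apply] at h
    rw [← h]
  obtain ⟨n, hn1, hn2⟩ := exists_midpoint m m1
  set t := dist m m1 / 2 with htdef
  have ht0 : 0 ≤ t := by rw [htdef]; positivity
  have M1 := hyperbolic_median o p (e p) m hpm hmep
  rw [← hLdef] at M1
  have M2 := hyperbolic_median o (e.symm p) p m1 (by rw [hd3]; exact hd1) (by rw [hd3]; exact hd2)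
  rw [hd3] at M2
  have M3 := hyperbolic_median o m m1 n hn1 hn2
  rw [← htdef] at M3
  have M4 := hyperbolic_median p m m1 n hn1 hn2
  rw [← htdef] at M4
  rw [hpm, dist_comm p m1, hd2] at M4
  -- abbreviations
  have g1 : Real.cosh (dist o p) ≤ Real.cosh R := cosh_mono' dist_nonneg hp
  have g2 : Real.cosh (dist o (e p)) ≤ Real.cosh R := cosh_mono' dist_nonneg hep
  have g3 : Real.cosh (dist o (e.symm p)) ≤ Real.cosh R := cosh_mono' dist_nonneg heinvp
  have gR : Real.cosh R ≤ Real.exp R := cosh_le_exp' hR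
  have f1 : Real.cosh (dist o m) * Real.cosh (L / 2) ≤ Real.exp R := by linarith
  have f2 : Real.cosh (dist o m1) * Real.cosh (L / 2) ≤ Real.exp R := by linarith
  have f4 : Real.cosh (dist p n) * Real.cosh t = Real.cosh (L / 2) := by linarith
  have hcpos : 0 < Real.cosh (L / 2) := Real.cosh_pos _
  have hctpos : 0 < Real.cosh t := Real.cosh_pos _
  -- step 1
  have step1 : Real.exp (dist p n) * Real.exp t ≤ 4 * Real.cosh (L / 2) := by
    calc Real.exp (dist p n) * Real.exp t
        ≤ (2 * Real.cosh (dist p n)) * (2 * Real.cosh t) :=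
          mul_le_mul (exp_le_two_cosh' _) (exp_le_two_cosh' _) (Real.exp_pos _).le
            (by positivity)
      _ = 4 * (Real.cosh (dist p n) * Real.cosh t) := by ring
      _ = 4 * Real.cosh (L / 2) := by rw [f4]
  -- step 2
  have step2 : Real.exp (dist o n) * Real.exp t * Real.exp (L / 2) ≤ 8 * Real.exp R := by
    have s2a : Real.exp (dist o n) * Real.exp t * Real.exp (L / 2)
        ≤ (2 * Real.cosh (dist o n)) * (2 * Real.cosh t) * (2 * Real.cosh (L / 2)) := by
      apply mul_le_mul _ (exp_le_two_cosh' _) (Real.exp_pos _).le (by positivity)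
      exact mul_le_mul (exp_le_two_cosh' _) (exp_le_two_cosh' _) (Real.exp_pos _).le
        (by positivity)
    have s2b : (2 * Real.cosh (dist o n)) * (2 * Real.cosh t) * (2 * Real.cosh (L / 2))
        = 4 * (Real.cosh (dist o m) * Real.cosh (L / 2))
          + 4 * (Real.cosh (dist o m1) * Real.cosh (L / 2)) := by
      linear_combination (-4) * Real.cosh (L / 2) * M3
    linarith
  -- triangle inequality
  have tri : R - μ ≤ dist p n + dist o n := by
    have := dist_triangle o n p
    rw [dist_comm n p] at this
    linarith
  have step3 : Real.exp (R - μ) ≤ Real.exp (dist p n) * Real.exp (dist o n) := by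
    rw [← Real.exp_add]
    exact Real.exp_le_exp.mpr tri
  -- combine
  have key1 : Real.exp (R - μ) * (Real.exp t * Real.exp t) * Real.exp (L / 2)
      ≤ 32 * Real.cosh (L / 2) * Real.exp R := by
    calc Real.exp (R - μ) * (Real.exp t * Real.exp t) * Real.exp (L / 2)
        ≤ Real.exp (dist p n) * Real.exp (dist o n) * (Real.exp t * Real.exp t)
            * Real.exp (L / 2) := by
          apply mul_le_mul_of_nonneg_right (mul_le_mul_of_nonneg_right step3 (by positivity))
            (by positivity)
      _ = (Real.exp (dist p n) * Real.exp t)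
            * (Real.exp (dist o n) * Real.exp t * Real.exp (L / 2)) := by ring
      _ ≤ (4 * Real.cosh (L / 2)) * (8 * Real.exp R) :=
          mul_le_mul step1 step2 (by positivity) (by positivity)
      _ = 32 * Real.cosh (L / 2) * Real.exp R := by ring
  have key2 : Real.exp (R - μ) * (Real.exp t * Real.exp t) ≤ 32 * Real.exp R := by
    have hcE : Real.cosh (L / 2) ≤ Real.exp (L / 2) := cosh_le_exp' (by positivity)
    have h' : Real.exp (R - μ) * (Real.exp t * Real.exp t) * Real.exp (L / 2)
        ≤ 32 * Real.exp R * Real.exp (L / 2) := by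
      refine key1.trans ?_
      nlinarith [Real.exp_pos R]
    exact le_of_mul_le_mul_right h' (Real.exp_pos _)
  have key3 : Real.exp (2 * t - μ) ≤ 32 := by
    have e' : Real.exp (2 * t - μ) * Real.exp R ≤ 32 * Real.exp R := by
      rw [← Real.exp_add, show 2 * t - μ + R = R - μ + t + t from by ring,
        Real.exp_add, Real.exp_add]
      calc Real.exp (R - μ) * Real.exp t * Real.exp t
          = Real.exp (R - μ) * (Real.exp t * Real.exp t) := by ring
        _ ≤ 32 * Real.exp R := key2
    exact le_of_mul_le_mul_right e' (Real.exp_pos _)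
  have t45 : 2 * t - μ ≤ 45 := by
    by_contra h
    push_neg at h
    have h1 : Real.exp 45 < Real.exp (2 * t - μ) := Real.exp_lt_exp.mpr h
    have h2 : (45 : ℝ) + 1 ≤ Real.exp 45 := Real.add_one_le_exp 45
    linarith
  have : dist (e.symm m) m = 2 * t := by
    rw [htdef, ← hm1, dist_comm m m1]; ring
  linarith
end

section
/- Let Γ be a group acting on the hyperbolic plane ℍ by isometries, let μ ≥ 0, and suppose every nontrivial element has displacement greater than μ + 45: dist(γ • z, z) > μ + 45 for every z ∈ ℍ and every γ ≠ 1. Let X ⊆ ℍ, o ∈ ℍ, R ≥ 0, and γ ∈ Γ with γ ≠ 1 be such that X ⊆ closedBall(o, R) and γ • X ⊆ closedBall(o, R). Then no point w ∈ X ∩ (γ • X) satisfies dist(o, w) ≥ R − μ; that is, X and γ • X do not intersect in the μ-neighborhood of the boundary of the ball. -/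
open scoped UpperHalfPlane
open scoped Pointwise

open Real UpperHalfPlane Matrix
open scoped MatrixGroups

private lemma ptolemyC' (a b c d : ℂ) :
    dist a c * dist b d ≤ dist a b * dist c d + dist b c * dist a d := by
  simp only [Complex.dist_eq]
  calc ‖a - c‖ * ‖b - d‖
      = ‖(a - b) * (c - d) + (b - c) * (a - d)‖ := by
        rw [← norm_mul]; congr 1; ring
    _ ≤ ‖(a - b) * (c - d)‖ + ‖(b - c) * (a - d)‖ :=
        norm_add_le _ _
    _ = _ := by rw [norm_mul, norm_mul]

private lemma sinhPtolemy' (a b c d : ℍ) :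
    sinh (dist a c / 2) * sinh (dist b d / 2) ≤
      sinh (dist a b / 2) * sinh (dist c d / 2) + sinh (dist b c / 2) * sinh (dist a d / 2) := by
  have ha := a.im_pos; have hb := b.im_pos; have hc := c.im_pos; have hd := d.im_pos
  simp only [UpperHalfPlane.sinh_half_dist]
  simp only [Real.sqrt_mul ha.le, Real.sqrt_mul hb.le, Real.sqrt_mul hc.le]
  have h := ptolemyC' a b c d
  have sa := Real.sqrt_pos.2 ha; have sb := Real.sqrt_pos.2 hb
  have sc := Real.sqrt_pos.2 hc; have sd := Real.sqrt_pos.2 hd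
  have k1 : (0:ℝ) ≤ dist (a:ℂ) b := dist_nonneg
  have k2 : (0:ℝ) ≤ dist (c:ℂ) d := dist_nonneg
  have k3 : (0:ℝ) ≤ dist (b:ℂ) c := dist_nonneg
  have k4 : (0:ℝ) ≤ dist (a:ℂ) d := dist_nonneg
  rw [div_mul_div_comm, div_mul_div_comm, div_mul_div_comm,
    div_add_div _ _ (by positivity) (by positivity), div_le_div_iff₀ (by positivity) (by positivity)]
  ring_nf
  simp only [Real.sq_sqrt ha.le, Real.sq_sqrt hb.le, Real.sq_sqrt hc.le, Real.sq_sqrt hd.le]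
  nlinarith [mul_le_mul_of_nonneg_right h
    (by positivity : (0:ℝ) ≤ 16 * (a.im * b.im * c.im * d.im))]

private noncomputable def midmat' (cc ρ : ℝ) (hρ : ρ ≠ 0) : SL(2,ℝ) :=
  ⟨!![-1/(2*ρ), (cc-ρ)/(2*ρ); 1, -(cc+ρ)], by
    rw [Matrix.det_fin_two_of]; field_simp; ring⟩

private lemma smul_re_eq_zero' (ρ cc : ℝ) (hρ : 0 < ρ) (z : ℍ)
    (hz : (z.re - cc)^2 + z.im^2 = ρ^2) :
    ((midmat' cc ρ hρ.ne') • z).re = 0 := by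
  rw [UpperHalfPlane.specialLinearGroup_apply]
  simp only [midmat', mk_re, Matrix.SpecialLinearGroup.coe_mk, Matrix.cons_val',
    Matrix.cons_val_zero, Matrix.cons_val_one, Matrix.head_cons, Matrix.empty_val',
    Matrix.cons_val_fin_one, Matrix.head_fin_const]
  rw [Complex.div_re]
  simp only [Complex.add_re, Complex.add_im, Complex.mul_re, Complex.mul_im, Complex.ofReal_re,
    Complex.ofReal_im, coe_re, coe_im, Complex.normSq_apply]
  simp only [Matrix.of_apply, Matrix.cons_val', Matrix.cons_val_zero, Matrix.cons_val_one,
    Matrix.head_cons, Matrix.empty_val', Matrix.cons_val_fin_one, Matrix.head_fin_const,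
    Algebra.algebraMap_self_apply]
  rw [← add_div, div_eq_zero_iff]
  left
  linear_combination (-1/(2*ρ)) * hz

private lemma mid_same_re' (x w : ℍ) (h : x.re = w.re) :
    ∃ m : ℍ, dist x m = dist x w / 2 ∧ dist m w = dist x w / 2 := by
  have hx := x.im_pos; have hw := w.im_pos
  refine ⟨mk ⟨x.re, Real.sqrt (x.im * w.im)⟩ (by simpa using Real.sqrt_pos.2 (by positivity)),
    ?_, ?_⟩
  · rw [UpperHalfPlane.dist_of_re_eq (by simp), UpperHalfPlane.dist_of_re_eq h]
    simp only [mk_im]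
    rw [Real.dist_eq, Real.dist_eq]
    rw [Real.log_sqrt (by positivity), Real.log_mul hx.ne' hw.ne']
    rw [show Real.log x.im - (Real.log x.im + Real.log w.im)/2
        = (Real.log x.im - Real.log w.im)/2 by ring, abs_div]
    simp
  · rw [UpperHalfPlane.dist_of_re_eq (by simp [h]), UpperHalfPlane.dist_of_re_eq h]
    simp only [mk_im]
    rw [Real.dist_eq, Real.dist_eq]
    rw [Real.log_sqrt (by positivity), Real.log_mul hx.ne' hw.ne']
    rw [show (Real.log x.im + Real.log w.im)/2 - Real.log w.im
        = (Real.log x.im - Real.log w.im)/2 by ring, abs_div]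
    simp

private lemma exists_midpoint' (x w : ℍ) :
    ∃ m : ℍ, dist x m = dist x w / 2 ∧ dist m w = dist x w / 2 := by
  by_cases h : x.re = w.re
  · exact mid_same_re' x w h
  · have hne : x.re - w.re ≠ 0 := sub_ne_zero.2 h
    set cc : ℝ := (x.re^2 + x.im^2 - w.re^2 - w.im^2)/(2*(x.re-w.re)) with hcc
    have hρpos : (0:ℝ) < (x.re - cc)^2 + x.im^2 := by nlinarith [x.im_pos, sq_nonneg (x.re - cc)]
    set ρ : ℝ := Real.sqrt ((x.re-cc)^2 + x.im^2) with hrho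
    have hρ : 0 < ρ := Real.sqrt_pos.2 hρpos
    have hx_circ : (x.re - cc)^2 + x.im^2 = ρ^2 := (Real.sq_sqrt hρpos.le).symm
    have hw_circ : (w.re - cc)^2 + w.im^2 = ρ^2 := by
      rw [← hx_circ, hcc]; field_simp; ring
    set g := midmat' cc ρ hρ.ne' with hg
    have h1 : (g • x).re = 0 := smul_re_eq_zero' ρ cc hρ x hx_circ
    have h2 : (g • w).re = 0 := smul_re_eq_zero' ρ cc hρ w hw_circ
    obtain ⟨m', hm1, hm2⟩ := mid_same_re' (g • x) (g • w) (by rw [h1, h2])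
    refine ⟨g⁻¹ • m', ?_, ?_⟩
    · calc dist x (g⁻¹ • m') = dist (g • x) (g • g⁻¹ • m') := (dist_smul g x _).symm
        _ = dist (g • x) m' := by rw [smul_inv_smul]
        _ = dist (g • x) (g • w) / 2 := hm1
        _ = dist x w / 2 := by rw [dist_smul]
    · calc dist (g⁻¹ • m') w = dist (g • g⁻¹ • m') (g • w) := (dist_smul g _ w).symm
        _ = dist m' (g • w) := by rw [smul_inv_smul]
        _ = dist (g • x) (g • w) / 2 := hm2
        _ = dist x w / 2 := by rw [dist_smul]

private lemma key_numeric' (μ R d T : ℝ) (hμ : 0 ≤ μ) (hd : μ + 45 < d)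
    (h1 : R - μ ≤ T) (h2 : d - R ≤ T) :
    2 * sinh (R/2) < sinh ((μ+45)/2) * sinh (T/2) := by
  have hT : 45/2 < T := by linarith
  have e1 : (12:ℝ) ≤ exp (T/2) := by nlinarith [add_one_le_exp (T/2)]
  have e2 : (23:ℝ) ≤ exp (45/2) := by nlinarith [add_one_le_exp (45/2:ℝ)]
  have e3 : exp ((μ+45)/2) = exp (μ/2) * exp (45/2) := by rw [← exp_add]; ring_nf
  have e4 : exp (R/2) ≤ exp (μ/2) * exp (T/2) := by
    rw [← exp_add]; exact exp_le_exp.2 (by linarith)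
  have e5 : (1:ℝ) ≤ exp (μ/2) := one_le_exp (by positivity)
  have e6 : exp (-((μ+45)/2)) ≤ 1 := exp_le_one_iff.2 (by linarith)
  have e7 : exp (-(T/2)) ≤ 1 := exp_le_one_iff.2 (by linarith)
  have e8 : (0:ℝ) < exp (-(R/2)) := exp_pos _
  rw [Real.sinh_eq, Real.sinh_eq, Real.sinh_eq]
  rw [e3] at *
  nlinarith [mul_le_mul e4 e7 (exp_pos _).le (by positivity : (0:ℝ) ≤ exp (μ/2) * exp (T/2)),
    mul_lt_mul_of_pos_left (show (1:ℝ) < exp (T/2) by linarith) (exp_pos (μ/2)),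
    mul_le_mul_of_nonneg_left e2 (show (0:ℝ) ≤ exp (μ/2) by positivity),
    mul_le_mul_of_nonneg_right e5 (show (0:ℝ) ≤ exp (T/2) by positivity),
    mul_le_mul (mul_le_mul_of_nonneg_left e2 (show (0:ℝ) ≤ exp (μ/2) by positivity))
      (show exp (T/2) - 1 ≥ 11 by linarith) (by linarith) (by positivity)]

set_option maxHeartbeats 1000000 in
/-- If the infimum displacement of `Γ` acting on the hyperbolic plane is greater than
`μ + 45`, then `Γ`-translates of a set lying in a ball do not intersect in the
`μ`-neighborhood of the boundary of that ball. -/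
theorem translates_disjoint_near_boundary {Γ : Type*} [Group Γ] [MulAction Γ ℍ]
    (isom : ∀ (γ : Γ) (z w : ℍ), dist (γ • z) (γ • w) = dist z w)
    (μ : ℝ) (hμ : 0 ≤ μ)
    (disp : ∀ (γ : Γ) (z : ℍ), γ ≠ 1 → μ + 45 < dist (γ • z) z)
    (X : Set ℍ) (o : ℍ) (R : ℝ) (hR : 0 ≤ R) (γ : Γ) (hγ : γ ≠ 1)
    (hX : X ⊆ Metric.closedBall o R) (hγX : γ • X ⊆ Metric.closedBall o R) :
    ∀ w ∈ X ∩ γ • X, ¬(R - μ ≤ dist o w) := by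
  rintro w ⟨hwX, hwγX⟩ hcon
  obtain ⟨x, hxX, hxw⟩ := Set.mem_smul_set.1 hwγX
  have hvmem : γ • w ∈ γ • X := Set.smul_mem_smul_set hwX
  obtain ⟨d, hd_def⟩ : ∃ t, dist x w = t := ⟨_, rfl⟩
  have hd : μ + 45 < d := by
    have h := disp γ x hγ
    rw [hxw, dist_comm, hd_def] at h
    exact h
  have hdwv : dist w (γ • w) = d := by
    nth_rewrite 1 [← hxw]; rw [isom]; exact hd_def
  -- ball bounds
  have hox : dist o x ≤ R := by
    have h := hX hxX; rw [Metric.mem_closedBall] at h; rwa [dist_comm]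
  have how : dist o w ≤ R := by
    have h := hX hwX; rw [Metric.mem_closedBall] at h; rwa [dist_comm]
  have hov : dist o (γ • w) ≤ R := by
    have h := hγX hvmem; rw [Metric.mem_closedBall] at h; rwa [dist_comm]
  -- midpoint
  obtain ⟨m, hm1, hm2⟩ := exists_midpoint' x w
  rw [hd_def] at hm1 hm2
  have hwp : dist w (γ • m) = d / 2 := by rw [← hxw, isom]; exact hm1
  have hpv : dist (γ • m) (γ • w) = d / 2 := by rw [isom]; exact hm2
  have hmp : μ + 45 < dist m (γ • m) := by
    have h := disp γ m hγ
    rwa [dist_comm] at h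
  -- abbreviations (opaque)
  obtain ⟨T, hT⟩ : ∃ t, dist o w = t := ⟨_, rfl⟩
  obtain ⟨S4, hS4⟩ : ∃ t, sinh (d/4) = t := ⟨_, rfl⟩
  obtain ⟨C4, hC4⟩ : ∃ t, cosh (d/4) = t := ⟨_, rfl⟩
  obtain ⟨sR, hsR⟩ : ∃ t, sinh (R/2) = t := ⟨_, rfl⟩
  obtain ⟨sT, hsT⟩ : ∃ t, sinh (T/2) = t := ⟨_, rfl⟩
  have hd0 : 0 < d := by linarith
  have hS4pos : 0 < S4 := by rw [← hS4]; exact (Real.sinh_pos_iff).2 (by linarith)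
  have hC4pos : 0 < C4 := by rw [← hC4]; exact Real.cosh_pos _
  have hS4C4 : S4 ≤ C4 := by
    rw [← hS4, ← hC4, Real.sinh_eq, Real.cosh_eq]
    nlinarith [exp_pos (-(d/4))]
  have hsRnn : 0 ≤ sR := by rw [← hsR]; exact (Real.sinh_nonneg_iff).2 (by linarith)
  have hS2 : sinh (d/2) = 2 * S4 * C4 := by
    rw [show d/2 = 2*(d/4) by ring, Real.sinh_two_mul, hS4, hC4]
  -- distance half rewrites
  have exm : sinh (dist x m / 2) = S4 := by rw [hm1, show d/2/2 = d/4 by ring, hS4]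
  have emw : sinh (dist m w / 2) = S4 := by rw [hm2, show d/2/2 = d/4 by ring, hS4]
  have ewp : sinh (dist w (γ • m) / 2) = S4 := by rw [hwp, show d/2/2 = d/4 by ring, hS4]
  have epv : sinh (dist (γ • m) (γ • w) / 2) = S4 := by
    rw [hpv, show d/2/2 = d/4 by ring, hS4]
  have sinh_mono_le : ∀ a b : ℝ, a ≤ b → sinh (a/2) ≤ sinh (b/2) := fun a b hab =>
    Real.sinh_le_sinh.2 (by linarith)
  have hsox : sinh (dist o x / 2) ≤ sR := by rw [← hsR]; exact sinh_mono_le _ _ hox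
  have hsowT : sinh (dist o w / 2) = sT := by rw [hT, hsT]
  have hsow : sT ≤ sR := by
    rw [← hsR, ← hsT, ← hT]; exact sinh_mono_le _ _ how
  have hsov : sinh (dist o (γ • w) / 2) ≤ sR := by rw [← hsR]; exact sinh_mono_le _ _ hov
  have hsnn : ∀ a b : ℍ, 0 ≤ sinh (dist a b / 2) := fun a b =>
    Real.sinh_nonneg_iff.2 (by positivity)
  have hT2 : d - R ≤ T := by
    have h3 : dist x w ≤ dist x o + dist o w := dist_triangle x o w
    rw [hd_def, hT, dist_comm x o] at h3; linarith
  have hsTpos : 0 < sT := by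
    rw [← hsT]; exact Real.sinh_pos_iff.2 (by linarith)
  -- Ptolemy 1 : (o, x, m, w)
  have P1 := sinhPtolemy' o x m w
  rw [emw, exm, hd_def, hS2, hsowT] at P1
  have q1 : sinh (dist o m / 2) * (2 * S4 * C4) ≤ 2 * S4 * sR := by
    linarith [P1, mul_le_mul_of_nonneg_left hsox hS4pos.le,
      mul_le_mul_of_nonneg_left hsow hS4pos.le]
  -- Ptolemy 2 : (o, w, p, v)
  have P2 := sinhPtolemy' o w (γ • m) (γ • w)
  rw [epv, ewp, hdwv, hS2, hsowT] at P2
  have q2 : sinh (dist o (γ • m) / 2) * (2 * S4 * C4) ≤ 2 * S4 * sR := by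
    linarith [P2, mul_le_mul_of_nonneg_left hsov hS4pos.le,
      mul_le_mul_of_nonneg_left hsow hS4pos.le]
  -- Ptolemy 3 : (m, w, p, o)
  have P3 := sinhPtolemy' m w (γ • m) o
  rw [emw, ewp, dist_comm w o, hsowT, dist_comm (γ • m) o, dist_comm m o] at P3
  -- combine
  have q3 : sinh (dist m (γ • m) / 2) * sT * (2 * S4 * C4) ≤ 4 * S4 * S4 * sR := by
    have r1 := mul_le_mul_of_nonneg_right P3 (by positivity : (0:ℝ) ≤ 2 * S4 * C4)
    linarith [r1, mul_le_mul_of_nonneg_left q1 hS4pos.le,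
      mul_le_mul_of_nonneg_left q2 hS4pos.le]
  have q5 : sinh (dist m (γ • m) / 2) * sT ≤ 2 * sR := by
    have hK : (0:ℝ) < 2 * S4 * C4 := by positivity
    have h44 : 4 * S4 * S4 * sR ≤ (2 * sR) * (2 * S4 * C4) := by
      nlinarith [mul_le_mul_of_nonneg_left hS4C4 (mul_nonneg (by linarith [hS4pos] : (0:ℝ) ≤ 4 * S4) hsRnn)]
    exact le_of_mul_le_mul_right (by linarith) hK
  -- conclusion
  have hT1 : R - μ ≤ T := by rw [← hT]; exact hcon
  have hkey := key_numeric' μ R d T hμ hd hT1 hT2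
  rw [hsR, hsT] at hkey
  have hfin : sinh (dist m (γ • m) / 2) < sinh ((μ+45)/2) :=
    lt_of_mul_lt_mul_right (lt_of_le_of_lt q5 hkey) hsTpos.le
  have hlast := Real.sinh_lt_sinh.1 hfin
  linarith
end

section
/- Let X and Y be nonempty finite subsets of the hyperbolic plane ℍ, both contained in closedBall(o, R), let μ ≥ 0, and suppose there is a point q ∈ X ∩ Y with dist(o, q) ≥ R − μ, diam(X)/2 ≤ dist(o, q), and diam(Y)/2 ≤ dist(o, q). If c_X is a barycenter of X and c_Y is a barycenter of Y, then dist(c_X, c_Y) ≤ |diam(X) − diam(Y)|/2 + 90 + 3μ. -/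
open scoped UpperHalfPlane

/-- `c` is a barycenter of `X` if it is the center of a smallest closed ball containing
`X`. -/
def IsBarycenter (X : Set ℍ) (c : ℍ) : Prop :=
  ∃ r : ℝ, 0 ≤ r ∧ X ⊆ Metric.closedBall c r ∧
    ∀ (c' : ℍ) (r' : ℝ), 0 ≤ r' → X ⊆ Metric.closedBall c' r' → r ≤ r'

section BarycenterAux
open Real

noncomputable section Hyp

/-- Euclidean-type quantity `sinh` of half-distance. -/
def sP (z w : ℍ) : ℝ := dist (z : ℂ) w / (2 * Real.sqrt (z.im * w.im))

/-- `exp` of half the hyperbolic distance. -/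
def eE (z w : ℍ) : ℝ := Real.exp (dist z w / 2)

lemma sP_nonneg (z w : ℍ) : 0 ≤ sP z w := by
  unfold sP; positivity

lemma sinh_eq_sP (z w : ℍ) : Real.sinh (dist z w / 2) = sP z w :=
  UpperHalfPlane.sinh_half_dist z w

lemma eE_eq (z w : ℍ) : eE z w = Real.sinh (dist z w / 2) + Real.cosh (dist z w / 2) := by
  rw [eE, ← Real.sinh_add_cosh]

lemma one_add_sP_le_eE (z w : ℍ) : 1 + sP z w ≤ eE z w := by
  rw [eE_eq, sinh_eq_sP]
  have := Real.one_le_cosh (dist z w / 2)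
  linarith

lemma eE_le (z w : ℍ) : eE z w ≤ 1 + 2 * sP z w := by
  rw [eE_eq, sinh_eq_sP]
  have h1 : Real.cosh (dist z w / 2) ^ 2 = 1 + Real.sinh (dist z w / 2) ^ 2 := Real.cosh_sq' _
  rw [sinh_eq_sP] at h1
  have h2 : 0 < Real.cosh (dist z w / 2) := Real.cosh_pos _
  have h3 : 0 ≤ sP z w := sP_nonneg z w
  nlinarith

lemma one_le_eE (z w : ℍ) : 1 ≤ eE z w := le_trans (by simpa using sP_nonneg z w) (one_add_sP_le_eE z w)

lemma sP_le_eE (z w : ℍ) : sP z w ≤ eE z w := le_trans (by linarith [sP_nonneg z w]) (one_add_sP_le_eE z w)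

lemma eE_comm (z w : ℍ) : eE z w = eE w z := by rw [eE, eE, UpperHalfPlane.dist_comm]

lemma eE_triangle (x z y : ℍ) : eE x y ≤ eE x z * eE z y := by
  rw [eE, eE, eE, ← Real.exp_add]
  apply Real.exp_le_exp.2
  linarith [UpperHalfPlane.dist_triangle x z y]

lemma sP_ptolemy (x y z w : ℍ) :
    sP x y * sP z w ≤ sP x z * sP y w + sP x w * sP y z := by
  have hx := x.im_pos; have hy := y.im_pos; have hz := z.im_pos; have hw := w.im_pos
  have hsx : (0:ℝ) < Real.sqrt x.im := Real.sqrt_pos.2 hx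
  have hsy : (0:ℝ) < Real.sqrt y.im := Real.sqrt_pos.2 hy
  have hsz : (0:ℝ) < Real.sqrt z.im := Real.sqrt_pos.2 hz
  have hsw : (0:ℝ) < Real.sqrt w.im := Real.sqrt_pos.2 hw
  have hmul : ∀ u v : ℍ, Real.sqrt (u.im * v.im) = Real.sqrt u.im * Real.sqrt v.im :=
    fun u v => Real.sqrt_mul u.im_pos.le _
  set D := Real.sqrt x.im * Real.sqrt y.im * Real.sqrt z.im * Real.sqrt w.im with hD
  have hDpos : 0 < D := by positivity
  have e : ∀ (u v u' v' : ℍ), Real.sqrt u.im * Real.sqrt v.im * Real.sqrt u'.im * Real.sqrt v'.im = D →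
      sP u v * sP u' v' = dist (u:ℂ) v * dist (u':ℂ) v' / (4 * D) := by
    intro u v u' v' h
    rw [sP, sP, hmul, hmul, ← h]
    field_simp
    ring_nf
  rw [e x y z w (by rw [hD]), e x z y w (by rw [hD]; ring), e x w y z (by rw [hD]; ring),
    ← add_div]
  apply (div_le_div_iff_of_pos_right (by positivity : (0:ℝ) < 4 * D)).2
  have h := EuclideanGeometry.mul_dist_le_mul_dist_add_mul_dist (x:ℂ) z y w
  rw [dist_comm (z:ℂ) (y:ℂ)] at h
  linarith

end Hyp

noncomputable section Hyp2

lemma arith_aux (a b p q u v sa sb : ℝ)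
    (h1a : 1 ≤ a) (h1b : 1 ≤ b) (h1p : 1 ≤ p) (h1q : 1 ≤ q) (h1u : 1 ≤ u) (h1v : 1 ≤ v)
    (hapv : a ≤ p * v) (hauq : a ≤ u * q) (hbvq : b ≤ v * q) (hbpu : b ≤ p * u)
    (hpt : sa * sb ≤ p * q + u * v)
    (h2a : a ≤ 1 + 2 * sa) (h2b : b ≤ 1 + 2 * sb)
    (hsa : 0 ≤ sa) (hsb : 0 ≤ sb) (hsa' : sa ≤ a) (hsb' : sb ≤ b) :
    a * b ≤ 13 * max (p * q) (u * v) := by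
  set M := max (p * q) (u * v) with hM
  have hMpq : p * q ≤ M := le_max_left _ _
  have hMuv : u * v ≤ M := le_max_right _ _
  have h1M : 1 ≤ M := le_trans (by nlinarith) hMpq
  have haM : a ≤ M := by nlinarith
  have hbM : b ≤ M := by nlinarith
  nlinarith

/-- The four-point (Gromov hyperbolicity) condition for the hyperbolic plane,
with constant `2 * log 13`. -/
theorem hyp_four_point (x y z w : ℍ) :
    dist x y + dist z w ≤
      max (dist x z + dist y w) (dist x w + dist y z) + 2 * Real.log 13 := by
  have hab : eE x y * eE z w ≤ 13 * max (eE x z * eE y w) (eE x w * eE y z) := by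
    apply arith_aux _ _ _ _ _ _ (sP x y) (sP z w)
      (one_le_eE x y) (one_le_eE z w) (one_le_eE x z) (one_le_eE y w)
      (one_le_eE x w) (one_le_eE y z)
    · rw [eE_comm y z]; exact eE_triangle x z y
    · rw [eE_comm y w]; exact eE_triangle x w y
    · rw [eE_comm y z]; exact eE_triangle z y w
    · rw [eE_comm x z]; exact eE_triangle z x w
    · calc sP x y * sP z w ≤ sP x z * sP y w + sP x w * sP y z := sP_ptolemy x y z w
        _ ≤ eE x z * eE y w + eE x w * eE y z := by
            have h1 := sP_le_eE x z; have h2 := sP_le_eE y w; have h3 := sP_le_eE x w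
            have h4 := sP_le_eE y z
            have n1 := sP_nonneg x z; have n2 := sP_nonneg y w; have n3 := sP_nonneg x w
            have n4 := sP_nonneg y z
            have g1 := one_le_eE x z; have g2 := one_le_eE y w
            nlinarith
    · exact eE_le x y
    · exact eE_le z w
    · exact sP_nonneg x y
    · exact sP_nonneg z w
    · exact sP_le_eE x y
    · exact sP_le_eE z w
  have hpos : (0:ℝ) < eE x y * eE z w := by
    have := one_le_eE x y; have := one_le_eE z w; nlinarith
  have h1M : (1:ℝ) ≤ max (eE x z * eE y w) (eE x w * eE y z) := by
    have := one_le_eE x z; have := one_le_eE y w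
    exact le_trans (by nlinarith) (le_max_left _ _)
  have hlog := Real.log_le_log hpos hab
  rw [Real.log_mul (by norm_num) (by linarith : max (eE x z * eE y w) (eE x w * eE y z) ≠ 0)] at hlog
  have hlab : Real.log (eE x y * eE z w) = dist x y / 2 + dist z w / 2 := by
    rw [eE, eE, ← Real.exp_add, Real.log_exp]
  have hlM : Real.log (max (eE x z * eE y w) (eE x w * eE y z)) ≤
      max (dist x z + dist y w) (dist x w + dist y z) / 2 := by
    rcases max_cases (eE x z * eE y w) (eE x w * eE y z) with ⟨hM1, _⟩ | ⟨hM1, _⟩ <;>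
      rw [hM1, eE, eE, ← Real.exp_add, Real.log_exp]
    · calc dist x z / 2 + dist y w / 2 = (dist x z + dist y w) / 2 := by ring
        _ ≤ _ := by gcongr; exact le_max_left _ _
    · calc dist x w / 2 + dist y z / 2 = (dist x w + dist y z) / 2 := by ring
        _ ≤ _ := by gcongr; exact le_max_right _ _
  linarith

end Hyp2

noncomputable section Geo

lemma key_id (sa ca sb cb ρ : ℝ) (ha : ca^2 = sa^2+1) (hb : cb^2 = sb^2+1)
    (hca : 0 < ca) (hcb : 0 < cb) (hρ : ρ ≠ 0) :
    ((ρ*(sb/cb) - ρ*(sa/ca))^2 + (ρ/ca - ρ/cb)^2) / (4*(ρ^2/(ca*cb)))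
      = (ca*cb - sa*sb - 1)/2 := by
  have h1 : (sb*ca - sa*cb)^2 + (cb - ca)^2 = 2*ca*cb*(ca*cb - sa*sb - 1) := by
    linear_combination (-(ca^2)) * hb + (-(cb^2)) * ha
  field_simp
  linear_combination 2 * h1

/-- Unit-speed parametrization of the semicircle geodesic with (Euclidean) center `c ∈ ℝ`
and radius `ρ > 0`. -/
def geoP (c ρ : ℝ) (hρ : 0 < ρ) (t : ℝ) : ℍ :=
  UpperHalfPlane.mk ⟨c - ρ * Real.tanh t, ρ / Real.cosh t⟩
    (by simp only; positivity)

lemma geoP_re (c ρ : ℝ) (hρ : 0 < ρ) (t : ℝ) : (geoP c ρ hρ t).re = c - ρ * Real.tanh t := rfl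
lemma geoP_im (c ρ : ℝ) (hρ : 0 < ρ) (t : ℝ) : (geoP c ρ hρ t).im = ρ / Real.cosh t := rfl
lemma geoP_coe_re (c ρ : ℝ) (hρ : 0 < ρ) (t : ℝ) :
    ((geoP c ρ hρ t : ℂ)).re = c - ρ * Real.tanh t := rfl
lemma geoP_coe_im (c ρ : ℝ) (hρ : 0 < ρ) (t : ℝ) :
    ((geoP c ρ hρ t : ℂ)).im = ρ / Real.cosh t := rfl

lemma geoP_dist (c ρ : ℝ) (hρ : 0 < ρ) (a b : ℝ) :
    dist (geoP c ρ hρ a) (geoP c ρ hρ b) = |a - b| := by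
  rw [UpperHalfPlane.dist_eq_iff_eq_sinh]
  have hca := Real.cosh_pos a
  have hcb := Real.cosh_pos b
  have him : (geoP c ρ hρ a).im * (geoP c ρ hρ b).im = ρ^2 / (Real.cosh a * Real.cosh b) := by
    rw [geoP_im, geoP_im]; field_simp
  have habs : dist ((geoP c ρ hρ a : ℂ)) ((geoP c ρ hρ b : ℂ)) ^ 2
      = (ρ * Real.tanh b - ρ * Real.tanh a)^2 + (ρ / Real.cosh a - ρ / Real.cosh b)^2 := by
    rw [Complex.dist_eq, Complex.sq_norm, Complex.normSq_apply]
    simp only [Complex.sub_re, Complex.sub_im, geoP_coe_re, geoP_coe_im]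
    ring
  set L : ℝ := dist ((geoP c ρ hρ a : ℂ)) ((geoP c ρ hρ b : ℂ)) / (2 * √((geoP c ρ hρ a).im * (geoP c ρ hρ b).im))
  have hLnn : 0 ≤ L := by positivity
  have hL2 : L^2 = Real.sinh ((a - b)/2) ^ 2 := by
    have h4 : (0:ℝ) < (geoP c ρ hρ a).im * (geoP c ρ hρ b).im := by
      have := (geoP c ρ hρ a).im_pos; have := (geoP c ρ hρ b).im_pos; positivity
    have hthis : L^2 = dist ((geoP c ρ hρ a : ℂ)) ((geoP c ρ hρ b : ℂ)) ^ 2 /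
        (4 * ((geoP c ρ hρ a).im * (geoP c ρ hρ b).im)) := by
      rw [div_pow, mul_pow, Real.sq_sqrt h4.le]; ring
    have hsinh : Real.sinh ((a-b)/2)^2 = (Real.cosh (a-b) - 1) / 2 := by
      have h := Real.cosh_sq ((a-b)/2)
      have h2 := Real.cosh_two_mul ((a-b)/2)
      have h3 : (2:ℝ) * ((a-b)/2) = a - b := by ring
      rw [h3] at h2
      linarith
    rw [hthis, habs, him, hsinh, Real.cosh_sub,
      Real.tanh_eq_sinh_div_cosh, Real.tanh_eq_sinh_div_cosh]
    exact key_id (Real.sinh a) (Real.cosh a) (Real.sinh b) (Real.cosh b) ρ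
      (by rw [Real.cosh_sq]) (by rw [Real.cosh_sq]) hca hcb (ne_of_gt hρ)
  have habs2 : Real.sinh (|a - b| / 2) ^ 2 = Real.sinh ((a-b)/2)^2 := by
    rcases abs_cases (a - b) with ⟨h, _⟩ | ⟨h, _⟩
    · rw [h]
    · rw [h, show -(a-b)/2 = -((a-b)/2) by ring, Real.sinh_neg]; ring
  have hsn : 0 ≤ Real.sinh (|a - b| / 2) := by
    rw [← Real.sinh_zero]
    exact Real.sinh_le_sinh.2 (by positivity)
  nlinarith [hL2, habs2, hLnn, hsn]

end Geo

section Geo2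

/-- Vertical geodesic. -/
noncomputable def geoV (x y : ℝ) (hy : 0 < y) (t : ℝ) : ℍ :=
  UpperHalfPlane.mk ⟨x, y * Real.exp t⟩ (by simp only; positivity)

lemma geoV_dist (x y : ℝ) (hy : 0 < y) (a b : ℝ) :
    dist (geoV x y hy a) (geoV x y hy b) = |a - b| := by
  rw [UpperHalfPlane.dist_of_re_eq (show (geoV x y hy a).re = (geoV x y hy b).re from rfl)]
  show dist (Real.log (y * Real.exp a)) (Real.log (y * Real.exp b)) = _
  rw [Real.log_mul (ne_of_gt hy) (Real.exp_ne_zero _),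
    Real.log_mul (ne_of_gt hy) (Real.exp_ne_zero _), Real.log_exp, Real.log_exp, Real.dist_eq]
  congr 1; ring

/-- Through any two points of `ℍ` there is a globally defined unit-speed geodesic. -/
lemma exists_geodesic (z w : ℍ) : ∃ γ : ℝ → ℍ, γ 0 = z ∧ γ (dist z w) = w ∧
    ∀ a b : ℝ, dist (γ a) (γ b) = |a - b| := by
  by_cases hre : z.re = w.re
  · -- vertical geodesic
    have hσ : ∃ σ : ℝ, |σ| = 1 ∧ geoV z.re z.im z.im_pos (σ * dist z w) = w := by
      have hd : dist z w = |Real.log z.im - Real.log w.im| := by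
        rw [UpperHalfPlane.dist_of_re_eq hre, Real.dist_eq]
      have hfit : ∀ s : ℝ, z.im * Real.exp s = w.im →
          geoV z.re z.im z.im_pos s = w := by
        intro s hs
        apply UpperHalfPlane.ext
        rw [Complex.ext_iff]
        exact ⟨hre, hs⟩
      rcases le_or_gt z.im w.im with h|h
      · refine ⟨1, by norm_num, hfit _ ?_⟩
        rw [one_mul, hd, abs_of_nonpos (by
          have := Real.log_le_log z.im_pos h; linarith), neg_sub,
          Real.exp_sub, Real.exp_log w.im_pos, Real.exp_log z.im_pos]
        field_simp
      · refine ⟨-1, by norm_num, hfit _ ?_⟩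
        rw [hd, abs_of_nonneg (by
          have := Real.log_le_log w.im_pos h.le; linarith)]
        rw [show (-1 : ℝ) * (Real.log z.im - Real.log w.im) = Real.log w.im - Real.log z.im by ring,
          Real.exp_sub, Real.exp_log w.im_pos, Real.exp_log z.im_pos]
        field_simp
    obtain ⟨σ, hσ1, hσw⟩ := hσ
    refine ⟨fun t => geoV z.re z.im z.im_pos (σ * t), ?_, ?_, ?_⟩
    · show geoV z.re z.im z.im_pos (σ * 0) = z
      rw [mul_zero]
      apply UpperHalfPlane.ext
      rw [Complex.ext_iff]
      refine ⟨rfl, ?_⟩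
      show z.im * Real.exp 0 = z.im
      simp
    · exact hσw
    · intro a b
      show dist (geoV z.re z.im z.im_pos (σ * a)) (geoV z.re z.im z.im_pos (σ * b)) = _
      rw [geoV_dist, show σ * a - σ * b = σ * (a - b) by ring, abs_mul, hσ1, one_mul]
  · -- semicircle geodesic
    have hzim := z.im_pos
    have hwim := w.im_pos
    set c : ℝ := (z.re^2 + z.im^2 - w.re^2 - w.im^2) / (2*(z.re - w.re)) with hc
    have hkey : (z.re - c)^2 + z.im^2 = (w.re - c)^2 + w.im^2 := by
      have hne : z.re - w.re ≠ 0 := sub_ne_zero.2 hre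
      rw [hc]
      field_simp
      ring
    set ρ : ℝ := Real.sqrt ((z.re - c)^2 + z.im^2) with hρdef
    have hρ : 0 < ρ := Real.sqrt_pos.2 (by positivity)
    have hρz : ρ^2 = (z.re - c)^2 + z.im^2 := Real.sq_sqrt (by positivity)
    have hρw : ρ^2 = (w.re - c)^2 + w.im^2 := by rw [hρz, hkey]
    clear hc hρdef
    clear_value c ρ
    -- the parameters of z and w
    have fit : ∀ u : ℍ, ρ^2 = (u.re - c)^2 + u.im^2 →
        geoP c ρ hρ (Real.arsinh ((c - u.re)/u.im)) = u := by
      intro u hu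
      have huim := u.im_pos
      have hcosh : Real.cosh (Real.arsinh ((c - u.re)/u.im)) = ρ / u.im := by
        rw [Real.cosh_arsinh]
        have he : 1 + ((c - u.re)/u.im)^2 = (ρ/u.im)^2 := by
          field_simp
          linear_combination -hu
        rw [he, Real.sqrt_sq (by positivity)]
      have hsinh : Real.sinh (Real.arsinh ((c - u.re)/u.im)) = (c - u.re)/u.im :=
        Real.sinh_arsinh _
      apply UpperHalfPlane.ext
      rw [Complex.ext_iff]
      constructor
      · show c - ρ * Real.tanh _ = u.re
        rw [Real.tanh_eq_sinh_div_cosh, hsinh, hcosh]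
        field_simp
        ring
      · show ρ / Real.cosh _ = u.im
        rw [hcosh]
        field_simp
    have hz := fit z hρz
    have hw := fit w hρw
    set tz := Real.arsinh ((c - z.re)/z.im) with htz
    set tw := Real.arsinh ((c - w.re)/w.im) with htw
    have hd : dist z w = |tz - tw| := by rw [← hz, ← hw, geoP_dist]
    rcases le_or_gt tz tw with h|h
    · refine ⟨fun t => geoP c ρ hρ (tz + t), ?_, ?_, ?_⟩
      · show geoP c ρ hρ (tz + 0) = z
        rw [add_zero]; exact hz
      · show geoP c ρ hρ (tz + dist z w) = w
        rw [hd, abs_of_nonpos (by linarith), show tz + -(tz - tw) = tw by ring]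
        exact hw
      · intro a b
        show dist (geoP c ρ hρ (tz + a)) (geoP c ρ hρ (tz + b)) = _
        rw [geoP_dist, show tz + a - (tz + b) = a - b by ring]
    · refine ⟨fun t => geoP c ρ hρ (tz - t), ?_, ?_, ?_⟩
      · show geoP c ρ hρ (tz - 0) = z
        rw [sub_zero]; exact hz
      · show geoP c ρ hρ (tz - dist z w) = w
        rw [hd, abs_of_nonneg (by linarith), show tz - (tz - tw) = tw by ring]
        exact hw
      · intro a b
        show dist (geoP c ρ hρ (tz - a)) (geoP c ρ hρ (tz - b)) = _
        rw [geoP_dist, show tz - a - (tz - b) = -(a - b) by ring, abs_neg]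

end Geo2

section MainAux
open Real

lemma exists_diam_pair (X : Set ℍ) (hfin : X.Finite) (hne : X.Nonempty) :
    ∃ x ∈ X, ∃ y ∈ X, dist x y = Metric.diam X := by
  obtain ⟨p, hp, hmax⟩ := Set.exists_max_image (X ×ˢ X) (fun p => dist p.1 p.2)
    (hfin.prod hfin) (hne.prod hne)
  rw [Set.mem_prod] at hp
  refine ⟨p.1, hp.1, p.2, hp.2, le_antisymm
    (Metric.dist_le_diam_of_mem hfin.isBounded hp.1 hp.2)
    (Metric.diam_le_of_forall_dist_le dist_nonneg fun a ha b hb => hmax (a, b) ⟨ha, hb⟩)⟩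

set_option maxHeartbeats 1000000 in
/-- The key step: a barycenter of `X` is within `μ + 6 * log 13` of the point of the
geodesic `γ` (from `q` towards `o`) at parameter `max 0 ((diam X - μ)/2)`. -/
lemma barycenter_near (X : Set ℍ) (hXfin : X.Finite) (hXne : X.Nonempty)
    (o : ℍ) (R : ℝ) (hXR : X ⊆ Metric.closedBall o R)
    (μ : ℝ) (hμ : 0 ≤ μ) (q : ℍ) (hqX : q ∈ X) (hqμ : R - μ ≤ dist o q)
    (hX2 : Metric.diam X / 2 ≤ dist o q)
    (γ : ℝ → ℍ) (hγ0 : γ 0 = q) (hγd : γ (dist q o) = o)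
    (hγ : ∀ a b : ℝ, dist (γ a) (γ b) = |a - b|)
    (cX : ℍ) (hcX : IsBarycenter X cX) :
    dist cX (γ (max 0 ((Metric.diam X - μ)/2))) ≤ μ + 6 * Real.log 13 := by
  obtain ⟨r, hr0, hrball, hrmin⟩ := hcX
  set dX := Metric.diam X with hdX
  have hdX0 : 0 ≤ dX := Metric.diam_nonneg
  have hdiam : ∀ u ∈ X, ∀ v ∈ X, dist u v ≤ dX :=
    fun u hu v hv => Metric.dist_le_diam_of_mem hXfin.isBounded hu hv
  have hlog13 : (0:ℝ) ≤ Real.log 13 := Real.log_nonneg (by norm_num)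
  set δ := Real.log 13 with hδ
  rcases lt_or_ge dX μ with hcase | hcase
  · -- degenerate case: the whole set is small, use `q` itself
    have htX : max 0 ((dX - μ)/2) = 0 := max_eq_left (by linarith)
    rw [htX, hγ0]
    have hrq : r ≤ dX := hrmin q dX hdX0 fun u hu =>
      Metric.mem_closedBall.2 (hdiam u hu q hqX)
    have := Metric.mem_closedBall.1 (hrball hqX)
    rw [dist_comm] at this
    linarith
  · -- main case
    have htX : max 0 ((dX - μ)/2) = (dX - μ)/2 := max_eq_right (by linarith)
    rw [htX]
    set t := (dX - μ)/2 with ht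
    set m := γ t with hm
    have hs : dist q o = dist o q := dist_comm q o
    have hts : t ≤ dist q o := by rw [hs]; linarith
    have hqm : dist q m = t := by
      have h := hγ 0 t
      rw [hγ0] at h
      rw [hm, h, abs_of_nonpos (by linarith)]; ring
    have hmo : dist m o = dist q o - t := by
      have h := hγ t (dist q o)
      rw [hγd] at h
      rw [hm, h, abs_of_nonpos (by linarith)]; ring
    -- the lens bound
    have hlens : ∀ u ∈ X, dist u m ≤ (dX + μ)/2 + 2 * δ := by
      intro u hu
      have h4 := hyp_four_point u m q o
      have h1 : dist u q ≤ dX := hdiam u hu q hqX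
      have h2 : dist u o ≤ R := Metric.mem_closedBall.1 (hXR hu)
      have h3 : dist m q = t := by rw [dist_comm]; exact hqm
      have h5 : dist u q + dist m o ≤ dist q o + (dX + μ)/2 := by
        rw [hmo]; rw [hs] at *; linarith
      have h6 : dist u o + dist m q ≤ dist q o + (dX + μ)/2 := by
        rw [h3]; rw [hs] at *; linarith
      have h7 : max (dist u q + dist m o) (dist u o + dist m q) ≤
          dist q o + (dX + μ)/2 := max_le h5 h6
      linarith
    have hB0 : (0:ℝ) ≤ (dX + μ)/2 + 2 * δ := by linarith
    have hrB : r ≤ (dX + μ)/2 + 2 * δ := by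
      apply hrmin m ((dX + μ)/2 + 2 * δ) hB0
      intro u hu
      exact Metric.mem_closedBall.2 (hlens u hu)
    -- diameter pair
    obtain ⟨x, hx, y, hy, hxy⟩ := exists_diam_pair X hXfin hXne
    have h4 := hyp_four_point cX m x y
    have hcx : dist cX x ≤ r := by rw [dist_comm]; exact Metric.mem_closedBall.1 (hrball hx)
    have hcy : dist cX y ≤ r := by rw [dist_comm]; exact Metric.mem_closedBall.1 (hrball hy)
    have hmx : dist m x ≤ (dX + μ)/2 + 2 * δ := by
      rw [dist_comm]; exact hlens x hx
    have hmy : dist m y ≤ (dX + μ)/2 + 2 * δ := by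
      rw [dist_comm]; exact hlens y hy
    have h8 : max (dist cX x + dist m y) (dist cX y + dist m x) ≤
        dX + μ + 4 * δ := max_le (by linarith) (by linarith)
    rw [← hdX] at hxy
    rw [hxy] at h4
    linarith

end MainAux

open Real in
/-- Barycenters of two sets in a ball that share a near-boundary point are
`|diam X - diam Y|/2`-apart, up to the error `90 + 3μ`. -/
theorem barycenters_distance (X Y : Set ℍ) (hXfin : X.Finite) (hXne : X.Nonempty)
    (hYfin : Y.Finite) (hYne : Y.Nonempty)
    (o : ℍ) (R : ℝ) (hR : 0 ≤ R)
    (hXR : X ⊆ Metric.closedBall o R) (hYR : Y ⊆ Metric.closedBall o R)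
    (μ : ℝ) (hμ : 0 ≤ μ)
    (q : ℍ) (hqX : q ∈ X) (hqY : q ∈ Y) (hqμ : R - μ ≤ dist o q)
    (hX2 : Metric.diam X / 2 ≤ dist o q) (hY2 : Metric.diam Y / 2 ≤ dist o q)
    (cX cY : ℍ) (hcX : IsBarycenter X cX) (hcY : IsBarycenter Y cY) :
    dist cX cY ≤ |Metric.diam X - Metric.diam Y| / 2 + 90 + 3 * μ := by
  obtain ⟨γ, hγ0, hγd, hγ⟩ := exists_geodesic q o
  have hX := barycenter_near X hXfin hXne o R hXR μ hμ q hqX hqμ hX2 γ hγ0 hγd hγ cX hcX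
  have hY := barycenter_near Y hYfin hYne o R hYR μ hμ q hqY hqμ hY2 γ hγ0 hγd hγ cY hcY
  set tX := max 0 ((Metric.diam X - μ)/2) with htX
  set tY := max 0 ((Metric.diam Y - μ)/2) with htY
  have hmm : dist (γ tX) (γ tY) ≤ |Metric.diam X - Metric.diam Y| / 2 := by
    rw [hγ tX tY]
    calc |tX - tY| ≤ |(Metric.diam X - μ)/2 - (Metric.diam Y - μ)/2| := by
          rw [htX, htY, max_comm 0 _, max_comm 0 ((Metric.diam Y - μ)/2)]
          exact abs_max_sub_max_le_abs _ _ _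
      _ = |Metric.diam X - Metric.diam Y| / 2 := by
          rw [show (Metric.diam X - μ)/2 - (Metric.diam Y - μ)/2
              = (Metric.diam X - Metric.diam Y)/2 by ring, abs_div]
          norm_num
  have htri : dist cX cY ≤ dist cX (γ tX) + dist (γ tX) (γ tY) + dist (γ tY) cY :=
    dist_triangle4 cX (γ tX) (γ tY) cY
  have hlog : Real.log 13 ≤ 2.7725887232 := by
    calc Real.log 13 ≤ Real.log 16 := Real.log_le_log (by norm_num) (by norm_num)
      _ = 4 * Real.log 2 := by
          rw [show (16:ℝ) = 2^4 by norm_num, Real.log_pow]; push_cast; ring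
      _ ≤ 4 * 0.6931471808 := by linarith [Real.log_two_lt_d9.le]
      _ = 2.7725887232 := by norm_num
  rw [dist_comm (γ tY) cY] at htri
  linarith

end BarycenterAux
end

section
/- Let e be an isometry of the hyperbolic plane ℍ (a bijective distance-preserving map ℍ → ℍ), let X and Y be nonempty finite subsets of ℍ, and suppose X, e(X), and Y are all contained in closedBall(o, R). Let μ ≥ 0, suppose there is q ∈ Y ∩ X with dist(o, q) ≥ R − μ and there is q' ∈ Y ∩ e(X) with dist(o, q') ≥ R − μ, suppose diam(Y) ≤ diam(X), and suppose diam(X)/2 ≤ dist(o, q) and diam(X)/2 ≤ dist(o, q'). If c is a barycenter of X, then dist(c, e(c)) ≤ 180 + 6μ. -/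
open scoped UpperHalfPlane
open Real UpperHalfPlane Metric

noncomputable def semic (x₀ ρ : ℝ) (hρ : 0 < ρ) (u : ℝ) : ℍ :=
  UpperHalfPlane.mk ⟨x₀ - ρ * Real.tanh u, ρ / Real.cosh u⟩
    (by simpa using div_pos hρ (Real.cosh_pos u))

lemma semic_isometry (x₀ ρ : ℝ) (hρ : 0 < ρ) : Isometry (semic x₀ ρ hρ) := by
  refine Isometry.of_dist_eq fun u v => ?_
  have hcu := Real.cosh_pos u
  have hcv := Real.cosh_pos v
  have hsu : Real.cosh u ^ 2 - Real.sinh u ^ 2 = 1 := Real.cosh_sq_sub_sinh_sq u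
  have hsv : Real.cosh v ^ 2 - Real.sinh v ^ 2 = 1 := Real.cosh_sq_sub_sinh_sq v
  have key : (Real.sinh v * Real.cosh u - Real.sinh u * Real.cosh v) ^ 2
      + (Real.cosh v - Real.cosh u) ^ 2
      = 2 * (Real.cosh u * Real.cosh v) *
        (Real.cosh u * Real.cosh v - Real.sinh u * Real.sinh v - 1) := by
    linear_combination (-(Real.cosh v ^ 2)) * hsu + (-(Real.cosh u ^ 2)) * hsv
  have h1 : Real.cosh (dist (semic x₀ ρ hρ u) (semic x₀ ρ hρ v)) = Real.cosh (u - v) := by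
    rw [UpperHalfPlane.cosh_dist]
    have him_u : (semic x₀ ρ hρ u).im = ρ / Real.cosh u := rfl
    have him_v : (semic x₀ ρ hρ v).im = ρ / Real.cosh v := rfl
    have hre_u : (semic x₀ ρ hρ u).re = x₀ - ρ * Real.tanh u := rfl
    have hre_v : (semic x₀ ρ hρ v).re = x₀ - ρ * Real.tanh v := rfl
    have hd : dist ((semic x₀ ρ hρ u) : ℂ) ((semic x₀ ρ hρ v) : ℂ) ^ 2 =
        (ρ * Real.tanh v - ρ * Real.tanh u) ^ 2 + (ρ / Real.cosh u - ρ / Real.cosh v) ^ 2 := by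
      rw [Complex.dist_eq_re_im, Real.sq_sqrt (by positivity)]
      simp only [UpperHalfPlane.coe_re, UpperHalfPlane.coe_im, hre_u, hre_v, him_u, him_v]
      ring
    rw [hd, him_u, him_v, Real.cosh_sub, Real.tanh_eq_sinh_div_cosh, Real.tanh_eq_sinh_div_cosh]
    field_simp
    linear_combination key
  rw [Real.dist_eq]
  have h3 := (Real.cosh_le_cosh).1 h1.le
  have h4 := (Real.cosh_le_cosh).1 h1.ge
  rw [abs_of_nonneg dist_nonneg] at h3 h4
  exact le_antisymm h3 h4

lemma semic_eq (x₀ ρ : ℝ) (hρ : 0 < ρ) (a : ℍ) (hx : (a.re - x₀) ^ 2 + a.im ^ 2 = ρ ^ 2) :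
    semic x₀ ρ hρ (Real.arsinh ((x₀ - a.re) / a.im)) = a := by
  have hia := a.im_pos
  set s := (x₀ - a.re) / a.im with hs
  have hcosh : Real.cosh (Real.arsinh s) = ρ / a.im := by
    rw [Real.cosh_arsinh]
    rw [show (1 : ℝ) + s ^ 2 = (ρ / a.im) ^ 2 by
      rw [hs]; field_simp; linear_combination hx]
    exact Real.sqrt_sq (by positivity)
  have hsinh : Real.sinh (Real.arsinh s) = s := Real.sinh_arsinh s
  refine UpperHalfPlane.ext' ?_ ?_
  · show x₀ - ρ * Real.tanh (Real.arsinh s) = a.re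
    rw [Real.tanh_eq_sinh_div_cosh, hsinh, hcosh, hs]
    field_simp
    ring
  · show ρ / Real.cosh (Real.arsinh s) = a.im
    rw [hcosh]
    field_simp

lemma exists_isometry_thru (z w : ℍ) :
    ∃ γ : ℝ → ℍ, Isometry γ ∧ ∃ u v : ℝ, γ u = z ∧ γ v = w := by
  rcases eq_or_ne z.re w.re with h | h
  · refine ⟨fun y => UpperHalfPlane.mk ⟨z.re, Real.exp y⟩ (Real.exp_pos y),
      UpperHalfPlane.isometry_vertical_line z.re, Real.log z.im, Real.log w.im, ?_, ?_⟩
    · exact UpperHalfPlane.ext' rfl (by simp [Real.exp_log z.im_pos])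
    · exact UpperHalfPlane.ext' (by simp [h]) (by simp [Real.exp_log w.im_pos])
  · have hiz := z.im_pos
    have hiw := w.im_pos
    set x₀ : ℝ := (z.re ^ 2 + z.im ^ 2 - w.re ^ 2 - w.im ^ 2) / (2 * (z.re - w.re)) with hx₀
    have hsub : z.re - w.re ≠ 0 := sub_ne_zero.2 h
    have hzx : (z.re - x₀) ^ 2 + z.im ^ 2 = (w.re - x₀) ^ 2 + w.im ^ 2 := by
      rw [hx₀]; field_simp; ring
    set ρ : ℝ := Real.sqrt ((z.re - x₀) ^ 2 + z.im ^ 2) with hρdef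
    have hρ : 0 < ρ := Real.sqrt_pos.2 (by positivity)
    have hz2 : (z.re - x₀) ^ 2 + z.im ^ 2 = ρ ^ 2 := (Real.sq_sqrt (by positivity)).symm
    have hw2 : (w.re - x₀) ^ 2 + w.im ^ 2 = ρ ^ 2 := by rw [← hzx]; exact hz2
    exact ⟨semic x₀ ρ hρ, semic_isometry x₀ ρ hρ, _, _,
      semic_eq x₀ ρ hρ z hz2, semic_eq x₀ ρ hρ w hw2⟩

/-- Points on geodesics exist at every parameter. -/
lemma exists_geodesic_point (z w : ℍ) (t : ℝ) (h0 : 0 ≤ t) (ht : t ≤ dist z w) :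
    ∃ p : ℍ, dist z p = t ∧ dist z p + dist p w = dist z w := by
  obtain ⟨γ, hγ, u, v, hu, hv⟩ := exists_isometry_thru z w
  have hzw : dist z w = |u - v| := by rw [← hu, ← hv, hγ.dist_eq, Real.dist_eq]
  rw [hzw] at ht
  rcases le_total u v with huv | huv
  · rw [abs_of_nonpos (by linarith)] at ht
    have e1 : dist z (γ (u + t)) = t := by
      rw [← hu, hγ.dist_eq, Real.dist_eq, abs_of_nonpos (by linarith)]; ring
    have e2 : dist (γ (u + t)) w = v - u - t := by
      rw [← hv, hγ.dist_eq, Real.dist_eq, abs_of_nonpos (by linarith)]; ring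
    refine ⟨γ (u + t), e1, ?_⟩
    rw [e1, e2, hzw, abs_of_nonpos (by linarith)]; ring
  · rw [abs_of_nonneg (by linarith)] at ht
    have e1 : dist z (γ (u - t)) = t := by
      rw [← hu, hγ.dist_eq, Real.dist_eq, abs_of_nonneg (by linarith)]; ring
    have e2 : dist (γ (u - t)) w = u - v - t := by
      rw [← hv, hγ.dist_eq, Real.dist_eq, abs_of_nonneg (by linarith)]; ring
    refine ⟨γ (u - t), e1, ?_⟩
    rw [e1, e2, hzw, abs_of_nonneg (by linarith)]; ring

/-- The sinh-Ptolemy inequality in the hyperbolic plane. -/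
lemma sinh_ptolemy (x y z w : ℍ) :
    Real.sinh (dist x z / 2) * Real.sinh (dist y w / 2) ≤
      Real.sinh (dist x y / 2) * Real.sinh (dist z w / 2) +
        Real.sinh (dist x w / 2) * Real.sinh (dist y z / 2) := by
  have hx := x.im_pos; have hy := y.im_pos; have hz := z.im_pos; have hw := w.im_pos
  have key : dist (x : ℂ) z * dist (y : ℂ) w ≤
      dist (x : ℂ) y * dist (z : ℂ) w + dist (x : ℂ) w * dist (y : ℂ) z := by
    simp only [Complex.dist_eq]
    calc ‖(x : ℂ) - z‖ * ‖(y : ℂ) - w‖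
        = ‖((x : ℂ) - z) * ((y : ℂ) - w)‖ := (norm_mul _ _).symm
      _ = ‖((x : ℂ) - y) * ((z : ℂ) - w) + ((x : ℂ) - w) * ((y : ℂ) - z)‖ := by
          congr 1; ring
      _ ≤ ‖((x : ℂ) - y) * ((z : ℂ) - w)‖ +
            ‖((x : ℂ) - w) * ((y : ℂ) - z)‖ := norm_add_le _ _
      _ = _ := by rw [norm_mul, norm_mul]
  set S := Real.sqrt (x.im * z.im * (y.im * w.im)) with hSdef
  have hS : 0 < S := Real.sqrt_pos.2 (by positivity)
  have l1 : Real.sinh (dist x z / 2) * Real.sinh (dist y w / 2)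
      = dist (x : ℂ) z * dist (y : ℂ) w / (4 * S) := by
    rw [UpperHalfPlane.sinh_half_dist, UpperHalfPlane.sinh_half_dist, div_mul_div_comm]
    congr 1
    rw [hSdef, Real.sqrt_mul (by positivity : (0:ℝ) ≤ x.im * z.im) (y.im * w.im)]; ring
  have l2 : Real.sinh (dist x y / 2) * Real.sinh (dist z w / 2)
      = dist (x : ℂ) y * dist (z : ℂ) w / (4 * S) := by
    rw [UpperHalfPlane.sinh_half_dist, UpperHalfPlane.sinh_half_dist, div_mul_div_comm]
    congr 1
    rw [hSdef, show x.im * z.im * (y.im * w.im)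
      = x.im * y.im * (z.im * w.im) by ring,
      Real.sqrt_mul (by positivity : (0:ℝ) ≤ x.im * y.im) (z.im * w.im)]; ring
  have l3 : Real.sinh (dist x w / 2) * Real.sinh (dist y z / 2)
      = dist (x : ℂ) w * dist (y : ℂ) z / (4 * S) := by
    rw [UpperHalfPlane.sinh_half_dist, UpperHalfPlane.sinh_half_dist, div_mul_div_comm]
    congr 1
    rw [hSdef, show x.im * z.im * (y.im * w.im)
      = x.im * w.im * (y.im * z.im) by ring,
      Real.sqrt_mul (by positivity : (0:ℝ) ≤ x.im * w.im) (y.im * z.im)]; ring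
  rw [l1, l2, l3, ← add_div]
  exact (div_le_div_iff_of_pos_right (by positivity)).2 key

/-- The four-point hyperbolicity inequality in `ℍ` with constant `10`. -/
lemma four_point (x y z w : ℍ) :
    dist x z + dist y w ≤ max (dist x y + dist z w) (dist x w + dist y z) + 10 := by
  set a := dist x z; set a' := dist y w
  set b := dist x y; set b' := dist z w
  set c := dist x w; set c' := dist y z
  set M := max (b + b') (c + c') with hM
  have hb : 0 ≤ b := dist_nonneg
  have hb' : 0 ≤ b' := dist_nonneg
  have hc : 0 ≤ c := dist_nonneg
  have hc' : 0 ≤ c' := dist_nonneg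
  have hM0 : 0 ≤ M := le_trans (by linarith) (le_max_left _ _)
  have id1 : ∀ p q : ℝ, 2 * (Real.sinh p * Real.sinh q) = Real.cosh (p + q) - Real.cosh (p - q) := by
    intro p q; rw [Real.cosh_add, Real.cosh_sub]; ring
  have hce : ∀ t : ℝ, 0 ≤ t → Real.cosh t ≤ Real.exp t := by
    intro t ht
    rw [Real.cosh_eq]
    have h1 : Real.exp (-t) ≤ Real.exp t := Real.exp_le_exp.2 (by linarith)
    linarith
  -- |a - a'| ≤ b + b'
  have tri1 : a ≤ b + a' + b' := by
    have := dist_triangle4 x y w z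
    have h2 : dist w z = b' := (dist_comm z w).symm
    simpa [h2] using this
  have tri2 : a' ≤ b + a + b' := by
    have := dist_triangle4 y x z w
    have h2 : dist y x = b := (dist_comm x y).symm
    simpa [h2] using this
  have habs : |(a - a') / 2| ≤ |M / 2| := by
    rw [abs_div, abs_div]
    have : |a - a'| ≤ b + b' := abs_sub_le_iff.2 ⟨by linarith, by linarith⟩
    have hbM : b + b' ≤ M := le_max_left _ _
    rw [abs_of_nonneg hM0]
    simp only [abs_two]
    linarith [abs_nonneg (a - a'), this]
  have h2 : Real.cosh ((a - a') / 2) ≤ Real.exp (M / 2) :=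
    le_trans (Real.cosh_le_cosh.2 habs) (hce _ (by linarith))
  have hbb : 2 * (Real.sinh (b / 2) * Real.sinh (b' / 2)) ≤ Real.exp (M / 2) := by
    rw [id1]
    have h3 : Real.cosh (b / 2 + b' / 2) ≤ Real.exp (M / 2) :=
      le_trans (Real.cosh_le_cosh.2 (by
        rw [abs_of_nonneg (show (0:ℝ) ≤ b / 2 + b' / 2 by linarith),
          abs_of_nonneg (show (0:ℝ) ≤ M / 2 by linarith)]
        have := le_max_left (b + b') (c + c'); linarith)) (hce _ (by linarith))
    linarith [Real.cosh_pos (b / 2 - b' / 2), h3]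
  have hcc : 2 * (Real.sinh (c / 2) * Real.sinh (c' / 2)) ≤ Real.exp (M / 2) := by
    rw [id1]
    have h3 : Real.cosh (c / 2 + c' / 2) ≤ Real.exp (M / 2) :=
      le_trans (Real.cosh_le_cosh.2 (by
        rw [abs_of_nonneg (show (0:ℝ) ≤ c / 2 + c' / 2 by linarith),
          abs_of_nonneg (show (0:ℝ) ≤ M / 2 by linarith)]
        have := le_max_right (b + b') (c + c'); linarith)) (hce _ (by linarith))
    linarith [Real.cosh_pos (c / 2 - c' / 2), h3]
  have hpt := sinh_ptolemy x y z w
  have hA : Real.cosh ((a + a') / 2) ≤ 3 * Real.exp (M / 2) := by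
    have := id1 (a / 2) (a' / 2)
    have h4 : a / 2 + a' / 2 = (a + a') / 2 := by ring
    have h5 : a / 2 - a' / 2 = (a - a') / 2 := by ring
    rw [h4, h5] at this
    nlinarith [hpt, hbb, hcc, h2]
  have hexp : Real.exp ((a + a') / 2) ≤ Real.exp (M / 2 + 5) := by
    have h6 : Real.exp ((a + a') / 2) ≤ 2 * Real.cosh ((a + a') / 2) := by
      rw [Real.cosh_eq]
      have := Real.exp_pos (-((a + a') / 2))
      linarith
    have h7 : Real.exp (M / 2 + 5) = Real.exp (M / 2) * Real.exp 5 := Real.exp_add _ _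
    have h8 : (6 : ℝ) ≤ Real.exp 5 := by
      have := Real.add_one_le_exp (5 : ℝ)
      linarith
    nlinarith [Real.exp_pos (M / 2)]
  have := Real.exp_le_exp.1 hexp
  have hfin : a + a' ≤ M + 10 := by linarith
  exact hfin

/-- Gromov hyperbolicity of `ℍ` in Gromov-product form, constant `10 = 2δ`. -/
lemma hyp5 (w x y z : ℍ) :
    min (dist w x + dist w y - dist x y) (dist w y + dist w z - dist y z) - 10
      ≤ dist w x + dist w z - dist x z := by
  have h := four_point x y z w
  have c1 : dist w x = dist x w := dist_comm w x
  have c2 : dist w y = dist y w := dist_comm w y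
  have c3 : dist w z = dist z w := dist_comm w z
  rcases le_total (dist x y + dist z w) (dist x w + dist y z) with hm | hm
  · rw [max_eq_right hm] at h
    have := min_le_right (dist w x + dist w y - dist x y) (dist w y + dist w z - dist y z)
    linarith
  · rw [max_eq_left hm] at h
    have := min_le_left (dist w x + dist w y - dist x y) (dist w y + dist w z - dist y z)
    linarith

/-- Quasi-center uniqueness. -/
lemma quasicenter {S : Set ℍ} {c p : ℍ} {r r₂ : ℝ} (hne : S.Nonempty)
    (hcr : S ⊆ Metric.closedBall c r)
    (hmin : ∀ (c' : ℍ) (r' : ℝ), 0 ≤ r' → S ⊆ Metric.closedBall c' r' → r ≤ r')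
    (hp : S ⊆ Metric.closedBall p r₂) : dist c p ≤ 2 * (r₂ - r) + 20 := by
  obtain ⟨x₀, hx₀⟩ := hne
  have hr₂ : 0 ≤ r₂ := le_trans dist_nonneg (mem_closedBall.1 (hp hx₀))
  have hrr₂ : r ≤ r₂ := hmin p r₂ hr₂ hp
  obtain ⟨m, hm1, hm2⟩ := exists_geodesic_point c p (dist c p / 2) (by positivity)
    (by linarith [dist_nonneg (x := c) (y := p)])
  have hxm : ∀ x ∈ S, dist x m ≤ r₂ - dist c p / 2 + 10 := by
    intro x hx
    have h5 := hyp5 x c m p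
    have hxc : dist x c ≤ r := mem_closedBall.1 (hcr hx)
    have hxp : dist x p ≤ r₂ := mem_closedBall.1 (hp hx)
    have hcm : dist c m = dist c p / 2 := hm1
    have hcm' : dist x m = dist m x := dist_comm x m
    rcases le_total (dist x c + dist x m - dist c m) (dist x m + dist x p - dist m p)
      with hm5 | hm5
    · rw [min_eq_left hm5] at h5
      linarith
    · rw [min_eq_right hm5] at h5
      linarith
  have h0 : 0 ≤ r₂ - dist c p / 2 + 10 := le_trans dist_nonneg (hxm x₀ hx₀)
  have := hmin m _ h0 (fun x hx => mem_closedBall.2 (hxm x hx))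
  linarith

/-- Near-boundary sets have their circumcenter near a point on the geodesic to the
near-boundary point. -/
lemma centerApprox {S : Set ℍ} {c o q : ℍ} {r R μ : ℝ} (hne : S.Nonempty)
    (hball : S ⊆ Metric.closedBall o R) (hq : q ∈ S) (hD : R - μ ≤ dist o q)
    (hcr : S ⊆ Metric.closedBall c r)
    (hmin : ∀ (c' : ℍ) (r' : ℝ), 0 ≤ r' → S ⊆ Metric.closedBall c' r' → r ≤ r')
    (hr : 0 ≤ r) (hμ : 0 ≤ μ) :
    ∃ p : ℍ, dist o p + dist p q = dist o q ∧ dist p q = min r (dist o q) ∧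
      dist c p ≤ 2 * μ + 40 := by
  have hqR : dist q o ≤ R := mem_closedBall.1 (hball hq)
  have hoq : dist q o = dist o q := dist_comm q o
  rcases le_total r (dist o q) with hrD | hrD
  · obtain ⟨p, hp1, hp2⟩ := exists_geodesic_point o q (dist o q - r) (by linarith) (by linarith)
    have hpq : dist p q = r := by linarith
    have hS : ∀ x ∈ S, dist x p ≤ r + μ + 10 := by
      intro x hx
      have h5 := hyp5 p q x o
      have hqc : dist q c ≤ r := mem_closedBall.1 (hcr hq)
      have hxc : dist x c ≤ r := mem_closedBall.1 (hcr hx)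
      have hxo : dist x o ≤ R := mem_closedBall.1 (hball hx)
      have t1 : dist q x ≤ dist q c + dist c x := dist_triangle q c x
      have e1 : dist c x = dist x c := dist_comm c x
      have e2 : dist p o = dist o p := dist_comm p o
      have e3 : dist q o = dist o q := dist_comm q o
      have e4 : dist p x = dist x p := dist_comm p x
      rcases le_total (dist p q + dist p x - dist q x) (dist p x + dist p o - dist x o)
        with hm5 | hm5
      · rw [min_eq_left hm5] at h5
        linarith
      · rw [min_eq_right hm5] at h5
        linarith
    have hqc := quasicenter hne hcr hmin (fun x hx => mem_closedBall.2 (hS x hx))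
    exact ⟨p, hp2, by rw [hpq, min_eq_left hrD], by linarith⟩
  · have hS : ∀ x ∈ S, dist x o ≤ r + μ := fun x hx => by
      have := mem_closedBall.1 (hball hx); linarith
    have hqc := quasicenter hne hcr hmin (fun x hx => mem_closedBall.2 (hS x hx))
    refine ⟨o, by simp, ?_, by linarith⟩
    rw [min_eq_right hrD]


/-- If `X`, `e(X)` and `Y` lie in a ball, `Y` meets both `X` and `e(X)` in the
`μ`-neighborhood of the boundary, and `diam Y ≤ diam X`, then the barycenter `c` of `X`
is moved at most `180 + 6μ` by the isometry `e`. -/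
theorem barycenter_jump (e : ℍ ≃ᵢ ℍ) (X Y : Set ℍ)
    (hXfin : X.Finite) (hXne : X.Nonempty) (hYfin : Y.Finite) (hYne : Y.Nonempty)
    (o : ℍ) (R : ℝ) (hR : 0 ≤ R)
    (hXR : X ⊆ Metric.closedBall o R) (heXR : (e '' X) ⊆ Metric.closedBall o R)
    (hYR : Y ⊆ Metric.closedBall o R)
    (μ : ℝ) (hμ : 0 ≤ μ)
    (q : ℍ) (hqY : q ∈ Y) (hqX : q ∈ X) (hqμ : R - μ ≤ dist o q)
    (q' : ℍ) (hq'Y : q' ∈ Y) (hq'eX : q' ∈ e '' X) (hq'μ : R - μ ≤ dist o q')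
    (hdiam : Metric.diam Y ≤ Metric.diam X)
    (hq2 : Metric.diam X / 2 ≤ dist o q) (hq'2 : Metric.diam X / 2 ≤ dist o q')
    (c : ℍ) (hc : IsBarycenter X c) :
    dist c (e c) ≤ 180 + 6 * μ := by
  obtain ⟨r, hr0, hXr, hmin⟩ := hc
  have hrR : r ≤ R := hmin o R hR hXR
  -- the image data
  have heXr : e '' X ⊆ Metric.closedBall (e c) r := by
    rintro _ ⟨x, hx, rfl⟩
    rw [mem_closedBall, e.dist_eq]
    exact mem_closedBall.1 (hXr hx)
  have hemin : ∀ (c' : ℍ) (r' : ℝ), 0 ≤ r' → e '' X ⊆ Metric.closedBall c' r' → r ≤ r' := by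
    intro c' r' h0 hsub
    refine hmin (e.symm c') r' h0 fun x hx => ?_
    have h1 : e x ∈ Metric.closedBall c' r' := hsub ⟨x, hx, rfl⟩
    rw [mem_closedBall] at h1 ⊢
    calc dist x (e.symm c') = dist (e x) (e (e.symm c')) := (e.dist_eq _ _).symm
      _ = dist (e x) c' := by rw [e.apply_symm_apply]
      _ ≤ r' := h1
  obtain ⟨p, hp1, hp2, hp3⟩ := centerApprox hXne hXR hqX hqμ hXr hmin hr0 hμ
  obtain ⟨p', hp'1, hp'2, hp'3⟩ :=
    centerApprox (hXne.image e) heXR hq'eX hq'μ heXr hemin hr0 hμ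
  -- distance bounds to the sphere
  have hDle : dist o q ≤ R := by
    have := mem_closedBall.1 (hXR hqX); rwa [dist_comm]
  have hD'le : dist o q' ≤ R := by
    have := mem_closedBall.1 (heXR hq'eX); rwa [dist_comm]
  -- diameter chain
  have hqq' : dist q q' ≤ 2 * r := by
    have h1 : dist q q' ≤ Metric.diam Y := Metric.dist_le_diam_of_mem hYfin.isBounded hqY hq'Y
    have h2 : Metric.diam X ≤ 2 * r := by
      refine Metric.diam_le_of_forall_dist_le (by linarith) fun x hx y hy => ?_
      have hx' := mem_closedBall.1 (hXr hx)
      have hy' := mem_closedBall.1 (hXr hy)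
      calc dist x y ≤ dist x c + dist c y := dist_triangle x c y
        _ ≤ 2 * r := by rw [dist_comm c y]; linarith
    linarith
  -- abbreviations
  set D := dist o q with hD
  set D' := dist o q' with hD'
  have hop : dist o p = D - min r D := by
    have : dist p q = min r D := hp2
    linarith [hp1]
  have hop' : dist o p' = D' - min r D' := by
    linarith [hp'1, hp'2]
  -- the three lower bounds
  have key : 2 * r - min r D - min r D' ≤ 2 * μ := by
    rcases le_total r D with h1 | h1 <;> rcases le_total r D' with h2 | h2 <;>
      simp [min_eq_left, min_eq_right, h1, h2] <;> linarith
  have hab : dist o p' ≤ dist o p + 2 * μ := by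
    rw [hop, hop']
    rcases le_total r D with h1 | h1 <;> rcases le_total r D' with h2 | h2 <;>
      simp [min_eq_left, min_eq_right, h1, h2] <;> linarith
  have hba : dist o p ≤ dist o p' + 2 * μ := by
    rw [hop, hop']
    rcases le_total r D with h1 | h1 <;> rcases le_total r D' with h2 | h2 <;>
      simp [min_eq_left, min_eq_right, h1, h2] <;> linarith
  set L := dist o p + dist o p' - 2 * μ with hL
  -- Gromov product estimates
  have h51 := hyp5 o p q q'
  have h52 := hyp5 o p q' p'
  have m1 : L ≤ dist o p + dist o q - dist p q := by
    have : dist p q = D - dist o p := by linarith [hp1]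
    rw [hL, this]
    linarith
  have m2 : L ≤ dist o q + dist o q' - dist q q' := by
    rw [hL, hop, hop']
    linarith
  have m3 : L ≤ dist o q' + dist o p' - dist q' p' := by
    have : dist q' p' = D' - dist o p' := by
      rw [dist_comm q' p']; linarith [hp'1]
    rw [hL, this]
    linarith
  have hA3 : L - 10 ≤ dist o p + dist o q' - dist p q' := by
    have := le_min m1 m2
    linarith [min_le_left (dist o p + dist o q - dist p q)
      (dist o q + dist o q' - dist q q'), h51, this]
  have hpp' : dist p p' ≤ 2 * μ + 20 := by
    have hmin2 : L - 10 ≤ min (dist o p + dist o q' - dist p q')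
        (dist o q' + dist o p' - dist q' p') := le_min hA3 (by linarith)
    linarith [h52]
  -- conclude
  have htri := dist_triangle4 c p p' (e c)
  have hp'ec : dist p' (e c) ≤ 2 * μ + 40 := by rw [dist_comm]; exact hp'3
  linarith
end
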